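/- arXiv:0712.0285 — 8 statements merged into one kernel-verified Lean document; each statement's English description precedes it below -/
import Mathlib

section
/- Let ℓ ≥ 1, let n be an integer and k ∈ {0,…,n−ℓ}. Assume β_{j|n}(x) > 0 for all j and x, and W[y_{k+1:k+ℓ}](x_0,x_{ℓ+1};X) > 0 for all x_0, x_{ℓ+1}. Then for every set C ∈ 𝒳, inf_{x∈X} (F_{k+ℓ−1|n} ∘ ⋯ ∘ F_{k|n})(x,C) ≥ α(y_{k+1:k+ℓ};C), where α(y_{1:ℓ};C) := inf_{(x_0,x_{ℓ+1})∈X×X} W[y_{1:ℓ}](x_0,x_{ℓ+1};C) / W[y_{1:ℓ}](x_0,x_{ℓ+1};X). -/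
open MeasureTheory ProbabilityTheory Filter
open scoped ENNReal

noncomputable section

variable {X : Type*} {Y : Type*} [MeasurableSpace X] [MeasurableSpace Y]

/-- Total variation distance between two measures: `sup_A |μ(A) - ν(A)|`,
the supremum running over all measurable sets. -/
def tvDist (μ ν : Measure X) : ℝ :=
  ⨆ A : {s : Set X // MeasurableSet s}, |(μ A.1).toReal - (ν A.1).toReal|

/-- Auxiliary recursion (with "fuel" `m = n - k`) defining the backward functions. -/
def backwardAux (Q : Kernel X X) (g : X → Y → ℝ≥0∞) (y : ℕ → Y) (n : ℕ) : ℕ → X → ℝ≥0∞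
  | 0 => fun _ => 1
  | m + 1 => fun x => ∫⁻ x', g x' (y (n - m)) * backwardAux Q g y n m x' ∂(Q x)

/-- The backward function `β_{k|n}`: `β_{n|n} ≡ 1` and
`β_{k|n}(x) = ∫ Q(x,dx') g(x', y_{k+1}) β_{k+1|n}(x')`. -/
def backward (Q : Kernel X X) (g : X → Y → ℝ≥0∞) (y : ℕ → Y) (n k : ℕ) : X → ℝ≥0∞ :=
  backwardAux Q g y n (n - k)

/-- The forward smoothing kernel `F_{k|n}`. -/
def forwardKernel (Q : Kernel X X) (g : X → Y → ℝ≥0∞) (y : ℕ → Y) (n k : ℕ) (x : X) :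
    Measure X :=
  if k < n then
    if backward Q g y n k x ≠ 0 then
      (backward Q g y n k x)⁻¹ •
        ((Q x).withDensity fun x' => g x' (y (k + 1)) * backward Q g y n (k + 1) x')
    else 0
  else Q x

/-- Composition of a family of (sub-)kernels: `iterComp F l s` applies
`F s`, then `F (s+1)`, ..., then `F (s+l-1)`. -/
def iterComp (F : ℕ → X → Measure X) : ℕ → ℕ → X → Measure X
  | 0, _, x => Measure.dirac x
  | l + 1, s, x => (F s x).bind (iterComp F l (s + 1))

/-- The `m`-skeleton `F_{k,m|n} = F_{km+m-1|n} ∘ ⋯ ∘ F_{km|n}`. -/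
def skeleton (Q : Kernel X X) (g : X → Y → ℝ≥0∞) (y : ℕ → Y) (n k m : ℕ) : X → Measure X :=
  iterComp (forwardKernel Q g y n) m (k * m)

/-- Coupling constant of a set `C ⊆ X × X` for the family of measures `x ↦ F x`:
`ε(C) = 1 - (1/2) sup_{(x,x') ∈ C} ‖F x - F x'‖_TV`. -/
def couplingConst (F : X → Measure X) (C : Set (X × X)) : ℝ :=
  1 - (1 / 2) * ⨆ p : C, tvDist (F (p : X × X).1) (F (p : X × X).2)

/-- Unnormalized filtering measure:
`A ↦ ∫ ξ(dx₀) g(x₀,y₀) ∏_{i=1}^n Q(x_{i-1},dx_i) g(x_i,y_i) 1_A(x_n)`. -/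
def unnormFilter (Q : Kernel X X) (g : X → Y → ℝ≥0∞) (y : ℕ → Y) (ξ : Measure X) :
    ℕ → Measure X
  | 0 => ξ.withDensity fun x => g x (y 0)
  | k + 1 =>
    (unnormFilter Q g y ξ k).bind fun x => (Q x).withDensity fun x' => g x' (y (k + 1))

/-- The filtering distribution `φ_{ξ,n}`: the unnormalized filter, normalized. -/
def filterDist (Q : Kernel X X) (g : X → Y → ℝ≥0∞) (y : ℕ → Y) (ξ : Measure X) (n : ℕ) :
    Measure X :=
  (unnormFilter Q g y ξ n Set.univ)⁻¹ • unnormFilter Q g y ξ n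


/-- The quantity
`W[y_{1:ℓ}](x₀, x_{ℓ+1}; A) = ∫⋯∫ ∏_{i=1}^ℓ q(x_{i−1},x_i) g(x_i,y_i) · q(x_ℓ,x_{ℓ+1}) 1_A(x_ℓ)
μ(dx_1)⋯μ(dx_ℓ)`, defined by recursion on `ℓ`; the sequence `ys` is used through
`ys 1, …, ys ℓ`. -/
def Wfun (q : X → X → ℝ≥0∞) (g : X → Y → ℝ≥0∞) (μ : Measure X) :
    ℕ → (ℕ → Y) → X → X → Set X → ℝ≥0∞
  | 0, _, x0, xe, A => A.indicator (fun _ => (1 : ℝ≥0∞)) x0 * q x0 xe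
  | l + 1, ys, x0, xe, A =>
    ∫⁻ x1, q x0 x1 * g x1 (ys 1) * Wfun q g μ l (fun i => ys (i + 1)) x1 xe A ∂μ

section AuxLemmas

set_option linter.unusedSectionVars false

variable {μ : Measure X} {q : X → X → ℝ≥0∞} {Q : Kernel X X} {g : X → Y → ℝ≥0∞}
  {y : ℕ → Y} {n : ℕ}

lemma measurable_g_right (hg : Measurable (Function.uncurry g)) (c : Y) :
    Measurable fun x => g x c :=
  hg.comp (measurable_id.prodMk measurable_const)

lemma measurable_backwardAux [IsSFiniteKernel Q] (hg : Measurable (Function.uncurry g)) :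
    ∀ m, Measurable (backwardAux Q g y n m) := by
  intro m
  induction m with
  | zero => exact measurable_const
  | succ m ih =>
    exact Measurable.lintegral_kernel_prod_right
      (((measurable_g_right hg _).comp measurable_snd).mul (ih.comp measurable_snd))

lemma measurable_backward [IsSFiniteKernel Q] (hg : Measurable (Function.uncurry g)) (k : ℕ) :
    Measurable (backward Q g y n k) :=
  measurable_backwardAux hg _

lemma backward_succ {k : ℕ} (hkn : k < n) (x : X) :
    backward Q g y n k x
      = ∫⁻ x', g x' (y (k + 1)) * backward Q g y n (k + 1) x' ∂(Q x) := by
  have h1 : n - k = (n - (k + 1)) + 1 := by omega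
  have h2 : n - (n - (k + 1)) = k + 1 := by omega
  rw [backward, h1]
  show (∫⁻ x', g x' (y (n - (n - (k + 1)))) * backwardAux Q g y n (n - (k + 1)) x' ∂(Q x)) = _
  rw [h2]
  rfl

lemma backward_self (x : X) : backward Q g y n n x = 1 := by
  simp [backward, backwardAux]

lemma forwardKernel_eq (hβ_pos : ∀ j x, 0 < backward Q g y n j x) {k : ℕ} (hkn : k < n)
    (x : X) :
    forwardKernel Q g y n k x = (backward Q g y n k x)⁻¹ •
      ((Q x).withDensity fun x' => g x' (y (k + 1)) * backward Q g y n (k + 1) x') := by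
  rw [forwardKernel, if_pos hkn, if_pos (hβ_pos k x).ne']

lemma measurable_forwardKernel [IsSFiniteKernel Q] (hg : Measurable (Function.uncurry g))
    (hβ_pos : ∀ j x, 0 < backward Q g y n j x) (k : ℕ) :
    Measurable (forwardKernel Q g y n k) := by
  by_cases hkn : k < n
  · apply Measure.measurable_of_measurable_coe
    intro s hs
    have hρ : Measurable fun x' => g x' (y (k + 1)) * backward Q g y n (k + 1) x' :=
      (measurable_g_right hg _).mul (measurable_backward hg _)
    have heq : (fun x => forwardKernel Q g y n k x s)
        = fun x => (backward Q g y n k x)⁻¹ *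
            ∫⁻ x', s.indicator
              (fun x' => g x' (y (k + 1)) * backward Q g y n (k + 1) x') x' ∂(Q x) := by
      funext x
      rw [forwardKernel_eq hβ_pos hkn, Measure.smul_apply, smul_eq_mul,
        withDensity_apply _ hs, ← lintegral_indicator hs]
    rw [heq]
    exact ((measurable_backward hg k).inv).mul
      (Measurable.lintegral_kernel_prod_right
        ((hρ.indicator hs).comp measurable_snd))
  · have heq : forwardKernel Q g y n k = fun x => Q x := by
      funext x; rw [forwardKernel, if_neg hkn]
    rw [heq]
    exact Q.measurable

lemma measurable_iterComp [IsSFiniteKernel Q] (hg : Measurable (Function.uncurry g))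
    (hβ_pos : ∀ j x, 0 < backward Q g y n j x) :
    ∀ l s, Measurable (iterComp (forwardKernel Q g y n) l s) := by
  intro l
  induction l with
  | zero => exact fun s => Measure.measurable_dirac
  | succ l ih =>
    intro s
    exact (Measure.measurable_bind' (ih (s + 1))).comp (measurable_forwardKernel hg hβ_pos s)

lemma forwardKernel_univ [IsMarkovKernel Q]
    (hβ_pos : ∀ j x, 0 < backward Q g y n j x)
    (hβ_fin : ∀ j x, backward Q g y n j x < ⊤) (k : ℕ) (x : X) :
    forwardKernel Q g y n k x Set.univ = 1 := by
  by_cases hkn : k < n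
  · rw [forwardKernel_eq hβ_pos hkn, Measure.smul_apply, smul_eq_mul,
      withDensity_apply _ MeasurableSet.univ, setLIntegral_univ, ← backward_succ hkn]
    exact ENNReal.inv_mul_cancel (hβ_pos k x).ne' (hβ_fin k x).ne
  · simp only [forwardKernel, if_neg hkn]
    exact measure_univ

lemma iterComp_univ [IsMarkovKernel Q] (hg : Measurable (Function.uncurry g))
    (hβ_pos : ∀ j x, 0 < backward Q g y n j x)
    (hβ_fin : ∀ j x, backward Q g y n j x < ⊤) :
    ∀ l s x, iterComp (forwardKernel Q g y n) l s x Set.univ = 1 := by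
  intro l
  induction l with
  | zero => intro s x; simp [iterComp]
  | succ l ih =>
    intro s x
    show ((forwardKernel Q g y n s x).bind
        (iterComp (forwardKernel Q g y n) l (s + 1))) Set.univ = 1
    rw [Measure.bind_apply MeasurableSet.univ (measurable_iterComp hg hβ_pos l (s + 1)).aemeasurable]
    simp only [ih]
    rw [lintegral_one, forwardKernel_univ hβ_pos hβ_fin]

lemma measurable_Wfun [SigmaFinite μ] (hq : Measurable (Function.uncurry q))
    (hg : Measurable (Function.uncurry g)) {C : Set X} (hC : MeasurableSet C) :
    ∀ (l : ℕ) (ys : ℕ → Y), Measurable fun p : X × X => Wfun q g μ l ys p.1 p.2 C := by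
  intro l
  induction l with
  | zero =>
    intro ys
    exact ((measurable_one.indicator hC).comp measurable_fst).mul hq
  | succ l ih =>
    intro ys
    simp only [Wfun]
    have hin : Measurable (Function.uncurry fun (p : X × X) (x1 : X) =>
        q p.1 x1 * g x1 (ys 1) * Wfun q g μ l (fun i => ys (i + 1)) x1 p.2 C) := by
      apply Measurable.mul
      · exact (hq.comp ((measurable_fst.comp measurable_fst).prodMk measurable_snd)).mul
          ((measurable_g_right hg _).comp measurable_snd)
      · exact (ih _).comp (measurable_snd.prodMk (measurable_snd.comp measurable_fst))
    exact Measurable.lintegral_prod_right hin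

/-- The endpoint weight. -/
def endw (Q : Kernel X X) (g : X → Y → ℝ≥0∞) (y : ℕ → Y) (n e : ℕ) (z : X) : ℝ≥0∞ :=
  if e < n then g z (y (e + 1)) * backward Q g y n (e + 1) z else 1

lemma measurable_endw [IsSFiniteKernel Q] (hg : Measurable (Function.uncurry g)) (e : ℕ) :
    Measurable (endw Q g y n e) := by
  unfold endw
  split
  · exact (measurable_g_right hg _).mul (measurable_backward hg _)
  · exact measurable_const

/-- The key product formula. -/
lemma key_formula [IsMarkovKernel Q] [SigmaFinite μ]
    (hq : Measurable (Function.uncurry q))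
    (hQq : ∀ x : X, (Q x : Measure X) = μ.withDensity (q x))
    (hg : Measurable (Function.uncurry g))
    (hβ_pos : ∀ j x, 0 < backward Q g y n j x)
    (hβ_fin : ∀ j x, backward Q g y n j x < ⊤)
    {C : Set X} (hC : MeasurableSet C) :
    ∀ (l k : ℕ), k + l ≤ n → ∀ x : X,
      backward Q g y n k x * iterComp (forwardKernel Q g y n) l k x C
        = ∫⁻ z, endw Q g y n (k + l) z * Wfun q g μ l (fun i => y (k + i)) x z C ∂μ := by
  intro l
  induction l with
  | zero =>
    intro k hkl x
    have hqx : Measurable (q x) := hq.comp measurable_prodMk_left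
    have hQ : Measurable fun z => q x z * endw Q g y n k z :=
      hqx.mul (measurable_endw hg k)
    have hint : (∫⁻ z, q x z * endw Q g y n k z ∂μ) = backward Q g y n k x := by
      have h1 : (∫⁻ z, q x z * endw Q g y n k z ∂μ) = ∫⁻ z, endw Q g y n k z ∂(Q x) := by
        rw [hQq x, lintegral_withDensity_eq_lintegral_mul μ hqx (measurable_endw hg k)]
        rfl
      rw [h1]
      rcases lt_or_ge k n with hkn | hkn
      · rw [backward_succ hkn]
        unfold endw
        simp only [if_pos hkn]
      · have hkeq : k = n := le_antisymm hkl hkn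
        subst hkeq
        unfold endw
        simp [backward_self, lt_irrefl]
    calc backward Q g y n k x * iterComp (forwardKernel Q g y n) 0 k x C
        = backward Q g y n k x * C.indicator 1 x := by
          rw [show iterComp (forwardKernel Q g y n) 0 k x = Measure.dirac x from rfl,
            Measure.dirac_apply' x hC]
      _ = C.indicator (fun _ => (1 : ℝ≥0∞)) x * ∫⁻ z, q x z * endw Q g y n k z ∂μ := by
          rw [hint, mul_comm]; rfl
      _ = ∫⁻ z, C.indicator (fun _ => (1 : ℝ≥0∞)) x * (q x z * endw Q g y n k z) ∂μ := by
          rw [lintegral_const_mul _ hQ]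
      _ = _ := by
          simp only [Nat.add_zero, Wfun]
          congr 1; funext z; ring
  | succ l ih =>
    intro k hkl x
    have hkn : k < n := by omega
    have hqx : Measurable (q x) := hq.comp measurable_prodMk_left
    have hys : (fun i => y (k + 1 + i)) = fun i => y (k + (i + 1)) := by
      funext i; congr 1; omega
    have hW'm : Measurable fun p : X × X =>
        Wfun q g μ l (fun i => y (k + (i + 1))) p.1 p.2 C := measurable_Wfun hq hg hC l _
    have hIH : ∀ x1, backward Q g y n (k + 1) x1 *
        iterComp (forwardKernel Q g y n) l (k + 1) x1 C
        = ∫⁻ z, endw Q g y n (k + (l + 1)) z *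
            Wfun q g μ l (fun i => y (k + (i + 1))) x1 z C ∂μ := by
      intro x1
      have h := ih (k + 1) (by omega) x1
      rw [show k + 1 + l = k + (l + 1) from by omega, hys] at h
      exact h
    have hmF : Measurable fun x1 => iterComp (forwardKernel Q g y n) l (k + 1) x1 C :=
      (Measure.measurable_coe hC).comp (measurable_iterComp hg hβ_pos l (k + 1))
    have hρ : Measurable fun x' => g x' (y (k + 1)) * backward Q g y n (k + 1) x' :=
      (measurable_g_right hg _).mul (measurable_backward hg _)
    have hLHS : backward Q g y n k x * iterComp (forwardKernel Q g y n) (l + 1) k x C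
        = ∫⁻ x1, q x x1 * g x1 (y (k + 1)) *
            (backward Q g y n (k + 1) x1 *
              iterComp (forwardKernel Q g y n) l (k + 1) x1 C) ∂μ := by
      have e1 : iterComp (forwardKernel Q g y n) (l + 1) k x C
          = (backward Q g y n k x)⁻¹ * ∫⁻ x1,
              q x x1 * ((g x1 (y (k + 1)) * backward Q g y n (k + 1) x1) *
                iterComp (forwardKernel Q g y n) l (k + 1) x1 C) ∂μ := by
        show ((forwardKernel Q g y n k x).bind
            (iterComp (forwardKernel Q g y n) l (k + 1))) C = _
        rw [Measure.bind_apply hC (measurable_iterComp hg hβ_pos l (k + 1)).aemeasurable,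
          forwardKernel_eq hβ_pos hkn, lintegral_smul_measure]
        congr 1
        have hρF : Measurable fun x1 => g x1 (y (k + 1)) * backward Q g y n (k + 1) x1 *
            iterComp (forwardKernel Q g y n) l (k + 1) x1 C := hρ.mul hmF
        rw [lintegral_withDensity_eq_lintegral_mul _ hρ hmF]
        rw [hQq x, show (fun a => ((fun x' => g x' (y (k + 1)) * backward Q g y n (k + 1) x') *
            fun x1 => iterComp (forwardKernel Q g y n) l (k + 1) x1 C) a)
            = fun x1 => g x1 (y (k + 1)) * backward Q g y n (k + 1) x1 *
              iterComp (forwardKernel Q g y n) l (k + 1) x1 C from rfl,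
          lintegral_withDensity_eq_lintegral_mul μ hqx hρF]
        rfl
      rw [e1, ← mul_assoc, ENNReal.mul_inv_cancel (hβ_pos k x).ne' (hβ_fin k x).ne, one_mul]
      congr 1; funext x1; ring
    rw [hLHS]
    have hstep : ∀ x1, q x x1 * g x1 (y (k + 1)) *
        (backward Q g y n (k + 1) x1 * iterComp (forwardKernel Q g y n) l (k + 1) x1 C)
        = ∫⁻ z, endw Q g y n (k + (l + 1)) z *
            (q x x1 * g x1 (y (k + 1)) *
              Wfun q g μ l (fun i => y (k + (i + 1))) x1 z C) ∂μ := by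
      intro x1
      have hmm : Measurable fun z => endw Q g y n (k + (l + 1)) z *
          Wfun q g μ l (fun i => y (k + (i + 1))) x1 z C :=
        (measurable_endw hg _).mul (hW'm.comp measurable_prodMk_left)
      calc q x x1 * g x1 (y (k + 1)) *
          (backward Q g y n (k + 1) x1 * iterComp (forwardKernel Q g y n) l (k + 1) x1 C)
          = q x x1 * g x1 (y (k + 1)) * ∫⁻ z, endw Q g y n (k + (l + 1)) z *
              Wfun q g μ l (fun i => y (k + (i + 1))) x1 z C ∂μ := by rw [hIH x1]
        _ = ∫⁻ z, (q x x1 * g x1 (y (k + 1))) * (endw Q g y n (k + (l + 1)) z *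
              Wfun q g μ l (fun i => y (k + (i + 1))) x1 z C) ∂μ :=
            (lintegral_const_mul _ hmm).symm
        _ = _ := by congr 1; funext z; ring
    simp only [hstep]
    have hmsw : Measurable (Function.uncurry fun x1 z =>
        endw Q g y n (k + (l + 1)) z * (q x x1 * g x1 (y (k + 1)) *
          Wfun q g μ l (fun i => y (k + (i + 1))) x1 z C)) :=
      ((measurable_endw hg _).comp measurable_snd).mul
        (((hq.comp (measurable_const.prodMk measurable_fst)).mul
          ((measurable_g_right hg _).comp measurable_fst)).mul hW'm)
    rw [lintegral_lintegral_swap hmsw.aemeasurable]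
    simp only [Wfun]
    congr 1; funext z
    have hin2 : Measurable fun x1 => q x x1 * g x1 (y (k + 1)) *
        Wfun q g μ l (fun i => y (k + (i + 1))) x1 z C :=
      (hqx.mul (measurable_g_right hg _)).mul
        (hW'm.comp (measurable_id.prodMk measurable_const))
    rw [← lintegral_const_mul _ hin2]

end AuxLemmas

/-- Uniform accessibility: for `ℓ ≥ 1`, `k + ℓ ≤ n`, positive backward
functions and positive normalizations `W(…;X)`, every measurable set `C` satisfies
`inf_x (F_{k+ℓ−1|n} ∘ ⋯ ∘ F_{k|n})(x,C) ≥ α(y_{k+1:k+ℓ};C)`, where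
`α(y_{1:ℓ};C) = inf_{x₀,x_{ℓ+1}} W[y_{1:ℓ}](x₀,x_{ℓ+1};C)/W[y_{1:ℓ}](x₀,x_{ℓ+1};X)`. -/
theorem uniform_accessibility
    (μ : Measure X) [SigmaFinite μ]
    (q : X → X → ℝ≥0∞) (hq : Measurable (Function.uncurry q))
    (Q : Kernel X X) [IsMarkovKernel Q]
    (hQq : ∀ x : X, (Q x : Measure X) = μ.withDensity (q x))
    (g : X → Y → ℝ≥0∞) (hg : Measurable (Function.uncurry g))
    (hg_pos : ∀ x yy, 0 < g x yy) (hg_fin : ∀ x yy, g x yy < ⊤)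
    (y : ℕ → Y) (n l k : ℕ) (hl : 1 ≤ l) (hk : k + l ≤ n)
    (hβ_pos : ∀ j x, 0 < backward Q g y n j x)
    (hβ_fin : ∀ j x, backward Q g y n j x < ⊤)
    (hW_pos : ∀ x0 xe : X, 0 < Wfun q g μ l (fun i => y (k + i)) x0 xe Set.univ)
    (C : Set X) (hC : MeasurableSet C) :
    ∀ x : X,
      (⨅ x0 : X, ⨅ xe : X,
          Wfun q g μ l (fun i => y (k + i)) x0 xe C /
            Wfun q g μ l (fun i => y (k + i)) x0 xe Set.univ) ≤
        iterComp (forwardKernel Q g y n) l k x C := by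
  intro x
  set α := ⨅ x0 : X, ⨅ xe : X,
      Wfun q g μ l (fun i => y (k + i)) x0 xe C /
        Wfun q g μ l (fun i => y (k + i)) x0 xe Set.univ with hα
  have hkeyC := key_formula hq hQq hg hβ_pos hβ_fin hC l k hk x
  have hkeyU := key_formula hq hQq hg hβ_pos hβ_fin MeasurableSet.univ l k hk x
  rw [iterComp_univ hg hβ_pos hβ_fin l k x, mul_one] at hkeyU
  -- pointwise bound
  have hpt : ∀ z, α * Wfun q g μ l (fun i => y (k + i)) x z Set.univ
      ≤ Wfun q g μ l (fun i => y (k + i)) x z C := by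
    intro z
    have hle : α ≤ Wfun q g μ l (fun i => y (k + i)) x z C /
        Wfun q g μ l (fun i => y (k + i)) x z Set.univ :=
      le_trans (iInf_le _ x) (iInf_le _ z)
    by_cases hT : Wfun q g μ l (fun i => y (k + i)) x z Set.univ = ⊤
    · have hz : α = 0 := by
        rw [hT, ENNReal.div_top] at hle
        exact le_antisymm hle zero_le
      simp [hz]
    · exact (ENNReal.le_div_iff_mul_le (Or.inl (hW_pos x z).ne') (Or.inl hT)).mp hle
  have hmWU : Measurable fun z => endw Q g y n (k + l) z *
      Wfun q g μ l (fun i => y (k + i)) x z Set.univ :=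
    (measurable_endw hg _).mul
      ((measurable_Wfun hq hg MeasurableSet.univ l _).comp measurable_prodMk_left)
  have hmono : α * backward Q g y n k x
      ≤ backward Q g y n k x * iterComp (forwardKernel Q g y n) l k x C := by
    rw [hkeyC, hkeyU, ← lintegral_const_mul _ hmWU]
    refine lintegral_mono fun z => ?_
    calc α * (endw Q g y n (k + l) z * Wfun q g μ l (fun i => y (k + i)) x z Set.univ)
        = endw Q g y n (k + l) z *
            (α * Wfun q g μ l (fun i => y (k + i)) x z Set.univ) := by ring
      _ ≤ endw Q g y n (k + l) z * Wfun q g μ l (fun i => y (k + i)) x z C :=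
          mul_le_mul_right (hpt z) _
  rw [mul_comm α _] at hmono
  exact (ENNReal.mul_le_mul_iff_right (hβ_pos k x).ne' (hβ_fin k x).ne).mp hmono

end
end

section
/- Let C ⊆ ℝ be a nonempty bounded set and z_0 ∈ C. Define D := diam(a(C)), ε(C) := min{ γ p_U(D), inf_{0≤u≤D+M} p_U(u), (sup_{0≤u≤D+M} p_U(u))^{−1} }, and h_C(x_1) := 1 if dist(x_1, a(C)) ≤ M and h_C(x_1) := p_U(|x_1 − a(z_0)|) otherwise. Then for all x_0 ∈ C and all x_1 ∈ ℝ, ε(C) h_C(x_1) ≤ p_U(|x_1 − a(x_0)|) ≤ ε(C)^{−1} h_C(x_1). -/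
open scoped Classical

/-- In the scalar functional autoregressive model, for any nonempty bounded
`C ⊆ ℝ` and `z₀ ∈ C`, with `D = diam(a(C))`,
`ε(C) = min{γ p_U(D), inf_{0≤u≤D+M} p_U(u), (sup_{0≤u≤D+M} p_U(u))⁻¹}` and
`h_C(x₁) = 1` if `dist(x₁, a(C)) ≤ M`, `= p_U(|x₁ − a(z₀)|)` otherwise, one has
`ε(C) h_C(x₁) ≤ p_U(|x₁ − a(x₀)|) ≤ ε(C)⁻¹ h_C(x₁)` for all `x₀ ∈ C` and `x₁ ∈ ℝ`. -/
theorem strong_small_set_FAR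
    (M γ : ℝ) (hM : 0 < M) (hγ : 0 < γ)
    (pU : ℝ → ℝ)
    (hpU_pos : ∀ u, 0 ≤ u → 0 < pU u)
    (hpU_bdd : ∃ Bd : ℝ, ∀ u, 0 ≤ u → pU u ≤ Bd)
    (hpU_low : ∃ md > 0, ∀ u ∈ Set.Icc (0 : ℝ) M, md ≤ pU u)
    (hpU_anti : ∀ s t : ℝ, M ≤ s → s ≤ t → pU t ≤ pU s)
    (hpU_mult : ∀ s t : ℝ, 0 ≤ s → 0 ≤ t → γ * pU s * pU t ≤ pU (s + t))
    (a : ℝ → ℝ) (aplus : ℝ) (haLip : ∀ x x' : ℝ, |a x - a x'| ≤ aplus * |x - x'|)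
    (C : Set ℝ) (hCne : C.Nonempty) (hCbdd : Bornology.IsBounded C)
    (z₀ : ℝ) (hz₀ : z₀ ∈ C) :
    ∀ x₀ ∈ C, ∀ x₁ : ℝ,
      min (γ * pU (Metric.diam (a '' C)))
            (min (sInf (pU '' Set.Icc 0 (Metric.diam (a '' C) + M)))
              (sSup (pU '' Set.Icc 0 (Metric.diam (a '' C) + M)))⁻¹) *
          (if Metric.infDist x₁ (a '' C) ≤ M then 1 else pU |x₁ - a z₀|) ≤
        pU |x₁ - a x₀| ∧
      pU |x₁ - a x₀| ≤
        (min (γ * pU (Metric.diam (a '' C)))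
            (min (sInf (pU '' Set.Icc 0 (Metric.diam (a '' C) + M)))
              (sSup (pU '' Set.Icc 0 (Metric.diam (a '' C) + M)))⁻¹))⁻¹ *
          (if Metric.infDist x₁ (a '' C) ≤ M then 1 else pU |x₁ - a z₀|) := by
  intro x₀ hx₀ x₁
  set S := a '' C with hS
  set D := Metric.diam S with hD
  have hD0 : 0 ≤ D := Metric.diam_nonneg
  have hSne : S.Nonempty := hCne.image a
  have haplus : 0 ≤ aplus := by
    have h := haLip 0 1
    have h2 : (0:ℝ) ≤ |a 0 - a 1| := abs_nonneg _
    simp at h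
    linarith
  have hSbdd : Bornology.IsBounded S := by
    obtain ⟨r, hr⟩ := Metric.isBounded_iff.mp hCbdd
    refine Metric.isBounded_iff.mpr ⟨aplus * r, ?_⟩
    rintro _ ⟨x, hx, rfl⟩ _ ⟨y, hy, rfl⟩
    have h1 := haLip x y
    have h2 := hr hx hy
    rw [Real.dist_eq] at h2 ⊢
    calc |a x - a y| ≤ aplus * |x - y| := h1
      _ ≤ aplus * r := mul_le_mul_of_nonneg_left h2 haplus
  -- basic distance facts
  have hmemS : ∀ y ∈ C, a y ∈ S := fun y hy => Set.mem_image_of_mem a hy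
  have hinf_le : ∀ y ∈ C, Metric.infDist x₁ S ≤ |x₁ - a y| := by
    intro y hy
    have := Metric.infDist_le_dist_of_mem (x := x₁) (hmemS y hy)
    rwa [Real.dist_eq] at this
  have hdist_le : ∀ y ∈ C, |x₁ - a y| ≤ Metric.infDist x₁ S + D := by
    intro y hy
    have := Metric.dist_le_infDist_add_diam (x := x₁) hSbdd (hmemS y hy)
    rwa [Real.dist_eq] at this
  -- the image set of pU over the compact interval
  set J := pU '' Set.Icc 0 (D + M) with hJ
  have hDM0 : (0:ℝ) ≤ D + M := by linarith
  have hJne : J.Nonempty := ⟨pU 0, Set.mem_image_of_mem _ (Set.mem_Icc.mpr ⟨le_refl 0, hDM0⟩)⟩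
  have hJbb : BddBelow J := by
    refine ⟨0, ?_⟩
    rintro _ ⟨u, hu, rfl⟩
    exact (hpU_pos u hu.1).le
  have hJba : BddAbove J := by
    obtain ⟨Bd, hBd⟩ := hpU_bdd
    refine ⟨Bd, ?_⟩
    rintro _ ⟨u, hu, rfl⟩
    exact hBd u hu.1
  have hInf_pos : 0 < sInf J := by
    obtain ⟨md, hmd, hmdle⟩ := hpU_low
    have hlb : min md (pU (D + M)) ≤ sInf J := by
      apply le_csInf hJne
      rintro _ ⟨u, hu, rfl⟩
      rcases le_or_gt u M with h | h
      · exact le_trans (min_le_left _ _) (hmdle u ⟨hu.1, h⟩)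
      · exact le_trans (min_le_right _ _) (hpU_anti u (D + M) h.le hu.2)
    have : 0 < min md (pU (D + M)) := lt_min hmd (hpU_pos _ hDM0)
    linarith
  have hSup_pos : 0 < sSup J := by
    have := le_csSup hJba (Set.mem_image_of_mem pU (Set.mem_Icc.mpr ⟨le_refl 0, hDM0⟩))
    exact lt_of_lt_of_le (hpU_pos 0 le_rfl) this
  set ε := min (γ * pU D) (min (sInf J) (sSup J)⁻¹) with hε
  have hpUD_pos : 0 < pU D := hpU_pos D hD0
  have hε_pos : 0 < ε :=
    lt_min (mul_pos hγ hpUD_pos) (lt_min hInf_pos (inv_pos.mpr hSup_pos))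
  -- key comparison lemma
  have hkey : ∀ y ∈ C, ∀ z ∈ C, M ≤ |x₁ - a y| →
      γ * pU D * pU |x₁ - a z| ≤ pU |x₁ - a y| := by
    intro y hy z hz hMy
    set s := |x₁ - a z|
    set t := |x₁ - a y|
    have hs0 : 0 ≤ s := abs_nonneg _
    have hts : t ≤ s + D := by
      have h1 : |t - s| ≤ |(x₁ - a y) - (x₁ - a z)| := abs_abs_sub_abs_le_abs_sub _ _
      have h2 : |(x₁ - a y) - (x₁ - a z)| = |a z - a y| := by ring_nf
      have h3 : dist (a z) (a y) ≤ D := Metric.dist_le_diam_of_mem hSbdd (hmemS z hz) (hmemS y hy)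
      rw [Real.dist_eq] at h3
      have := abs_le.mp (h1.trans (h2 ▸ h3))
      linarith [this.1, this.2]
    have h4 : pU (s + D) ≤ pU t := hpU_anti t (s + D) hMy hts
    have h5 : γ * pU s * pU D ≤ pU (s + D) := hpU_mult s D hs0 hD0
    calc γ * pU D * pU s = γ * pU s * pU D := by ring
      _ ≤ pU (s + D) := h5
      _ ≤ pU t := h4
  have hx0pos : 0 < pU |x₁ - a x₀| := hpU_pos _ (abs_nonneg _)
  have hz0pos : 0 < pU |x₁ - a z₀| := hpU_pos _ (abs_nonneg _)
  by_cases hcase : Metric.infDist x₁ S ≤ M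
  · -- near case: h = 1
    simp only [hcase, if_pos, mul_one]
    have hmemIcc : |x₁ - a x₀| ∈ Set.Icc (0:ℝ) (D + M) := by
      constructor
      · exact abs_nonneg _
      · have := hdist_le x₀ hx₀; linarith
    have hmemJ : pU |x₁ - a x₀| ∈ J := Set.mem_image_of_mem pU hmemIcc
    constructor
    · calc ε ≤ min (sInf J) (sSup J)⁻¹ := min_le_right _ _
        _ ≤ sInf J := min_le_left _ _
        _ ≤ pU |x₁ - a x₀| := csInf_le hJbb hmemJ
    · have h1 : pU |x₁ - a x₀| ≤ sSup J := le_csSup hJba hmemJ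
      have h2 : ε ≤ (sSup J)⁻¹ := le_trans (min_le_right _ _) (min_le_right _ _)
      have h3 : sSup J ≤ ε⁻¹ := by
        have := inv_anti₀ hε_pos h2
        rwa [inv_inv] at this
      linarith
  · -- far case
    simp only [hcase, if_neg, not_false_iff]
    push_neg at hcase
    have hMfar : ∀ y ∈ C, M ≤ |x₁ - a y| := fun y hy =>
      le_trans hcase.le (hinf_le y hy)
    have hεle : ε ≤ γ * pU D := min_le_left _ _
    constructor
    · have hk := hkey x₀ hx₀ z₀ hz₀ (hMfar x₀ hx₀)
      calc ε * pU |x₁ - a z₀| ≤ (γ * pU D) * pU |x₁ - a z₀| :=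
            mul_le_mul_of_nonneg_right hεle hz0pos.le
        _ ≤ pU |x₁ - a x₀| := hk
    · have hk := hkey z₀ hz₀ x₀ hx₀ (hMfar z₀ hz₀)
      have hγD : 0 < γ * pU D := mul_pos hγ hpUD_pos
      have h1 : pU |x₁ - a x₀| ≤ (γ * pU D)⁻¹ * pU |x₁ - a z₀| :=
        (le_inv_mul_iff₀ hγD).mpr hk
      have h2 : (γ * pU D)⁻¹ ≤ ε⁻¹ := inv_anti₀ hε_pos hεle
      calc pU |x₁ - a x₀| ≤ (γ * pU D)⁻¹ * pU |x₁ - a z₀| := h1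
        _ ≤ ε⁻¹ * pU |x₁ - a z₀| := mul_le_mul_of_nonneg_right h2 hz0pos.le
end

section
/- Let C ⊆ ℝ be a nonempty bounded set and z_1 ∈ C. Define ν(C) := min{ γ p_U(diam(C)), inf_{0≤u≤diam(C)+M} p_U(u) } and k_C(x_0) := 1 if dist(a(x_0), C) < M and k_C(x_0) := p_U(|z_1 − a(x_0)|) otherwise. Then for all x_0 ∈ ℝ and all x_1 ∈ C, p_U(|x_1 − a(x_0)|) ≥ ν(C) k_C(x_0). -/
open scoped Classical

/-- In the scalar functional autoregressive model, for any nonempty bounded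
`C ⊆ ℝ` and `z₁ ∈ C`, with `ν(C) = min{γ p_U(diam C), inf_{0≤u≤diam C+M} p_U(u)}` and
`k_C(x₀) = 1` if `dist(a(x₀), C) < M`, `= p_U(|z₁ − a(x₀)|)` otherwise, one has
`p_U(|x₁ − a(x₀)|) ≥ ν(C) k_C(x₀)` for all `x₀ ∈ ℝ` and `x₁ ∈ C`. -/
theorem decomposability_FAR
    (M γ : ℝ) (hM : 0 < M) (hγ : 0 < γ)
    (pU : ℝ → ℝ)
    (hpU_pos : ∀ u, 0 ≤ u → 0 < pU u)
    (hpU_bdd : ∃ Bd : ℝ, ∀ u, 0 ≤ u → pU u ≤ Bd)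
    (hpU_low : ∃ md > 0, ∀ u ∈ Set.Icc (0 : ℝ) M, md ≤ pU u)
    (hpU_anti : ∀ s t : ℝ, M ≤ s → s ≤ t → pU t ≤ pU s)
    (hpU_mult : ∀ s t : ℝ, 0 ≤ s → 0 ≤ t → γ * pU s * pU t ≤ pU (s + t))
    (a : ℝ → ℝ) (aplus : ℝ) (haLip : ∀ x x' : ℝ, |a x - a x'| ≤ aplus * |x - x'|)
    (C : Set ℝ) (hCne : C.Nonempty) (hCbdd : Bornology.IsBounded C)
    (z₁ : ℝ) (hz₁ : z₁ ∈ C) :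
    ∀ x₀ : ℝ, ∀ x₁ ∈ C,
      min (γ * pU (Metric.diam C)) (sInf (pU '' Set.Icc 0 (Metric.diam C + M))) *
          (if Metric.infDist (a x₀) C < M then 1 else pU |z₁ - a x₀|) ≤
        pU |x₁ - a x₀| := by
  intro x₀ x₁ hx₁
  set d := Metric.diam C with hd
  have hd0 : 0 ≤ d := Metric.diam_nonneg
  have ht0 : (0:ℝ) ≤ |x₁ - a x₀| := abs_nonneg _
  by_cases hcase : Metric.infDist (a x₀) C < M
  · -- k = 1
    rw [if_pos hcase, mul_one]
    obtain ⟨z, hzC, hz⟩ := (Metric.infDist_lt_iff hCne).mp hcase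
    have hle : |x₁ - a x₀| ≤ d + M := by
      have hz' : |z - a x₀| ≤ M := by
        have := hz.le
        rw [Real.dist_eq] at this
        rw [abs_sub_comm]; exact this
      have hxz : |x₁ - z| ≤ d := by
        have := Metric.dist_le_diam_of_mem hCbdd hx₁ hzC
        rwa [Real.dist_eq] at this
      calc |x₁ - a x₀| ≤ |x₁ - z| + |z - a x₀| := abs_sub_le _ _ _
        _ ≤ d + M := by linarith
    have hmem : pU |x₁ - a x₀| ∈ pU '' Set.Icc 0 (d + M) :=
      ⟨_, ⟨ht0, hle⟩, rfl⟩
    have hbdd : BddBelow (pU '' Set.Icc 0 (d + M)) :=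
      ⟨0, fun y ⟨u, hu, hy⟩ => hy ▸ (hpU_pos u hu.1).le⟩
    exact le_trans (min_le_right _ _) (csInf_le hbdd hmem)
  · -- k = pU |z₁ - a x₀|
    rw [if_neg hcase]
    push_neg at hcase
    set s := |z₁ - a x₀| with hs
    have hs0 : (0:ℝ) ≤ s := abs_nonneg _
    have hsM : M ≤ s := by
      have := Metric.infDist_le_dist_of_mem (x := a x₀) hz₁
      rw [Real.dist_eq, abs_sub_comm] at this
      exact le_trans hcase this
    have htM : M ≤ |x₁ - a x₀| := by
      have := Metric.infDist_le_dist_of_mem (x := a x₀) hx₁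
      rw [Real.dist_eq, abs_sub_comm] at this
      exact le_trans hcase this
    have htds : |x₁ - a x₀| ≤ d + s := by
      have hxz : |x₁ - z₁| ≤ d := by
        have := Metric.dist_le_diam_of_mem hCbdd hx₁ hz₁
        rwa [Real.dist_eq] at this
      calc |x₁ - a x₀| ≤ |x₁ - z₁| + |z₁ - a x₀| := abs_sub_le _ _ _
        _ ≤ d + s := by linarith
    have h1 : γ * pU d * pU s ≤ pU (d + s) := hpU_mult d s hd0 hs0
    have h2 : pU (d + s) ≤ pU |x₁ - a x₀| := hpU_anti _ _ htM htds
    have h3 : min (γ * pU d) (sInf (pU '' Set.Icc 0 (d + M))) * pU s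
        ≤ γ * pU d * pU s :=
      mul_le_mul_of_nonneg_right (min_le_left _ _) (hpU_pos s hs0).le
    linarith
end

section
/- There exist K_0 > 0 and δ > 0 such that for all K ≥ K_0 and all y ∈ ℝ, ∫_{C_K(y)} p_V(|y − b(x)|) dx ≥ δ; equivalently, lim_{K→∞} inf_{y∈ℝ} ∫_{C_K(y)} p_V(|y − b(x)|) dx > 0. -/
open MeasureTheory

/-- In the scalar observation model, there exist `K₀ > 0` and `δ > 0`
such that for all `K ≥ K₀` and all `y ∈ ℝ`, `∫_{C_K(y)} p_V(|y − b(x)|) dx ≥ δ`, where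
`C_K(y) = {x : |x − b⁻¹(y)| ≤ K}`. -/
theorem integral_obs_density_bounded_below
    (M : ℝ) (hM : 0 < M)
    (b : ℝ → ℝ) (b' : ℝ → ℝ) (bminus b₁ : ℝ) (hbminus : 0 < bminus) (hb₁ : bminus ≤ b₁)
    (hb_deriv : ∀ x, HasDerivAt b (b' x) x)
    (hb'_low : ∀ x, bminus ≤ b' x) (hb'_up : ∀ x, b' x ≤ b₁)
    (hb_bij : Function.Bijective b)
    (pV : ℝ → ℝ)
    (hpV_pos : ∀ u, 0 ≤ u → 0 < pV u)
    (hpV_bdd : ∃ Bd : ℝ, ∀ u, 0 ≤ u → pV u ≤ Bd)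
    (hpV_lsc : LowerSemicontinuousOn pV (Set.Ici 0))
    (hpV_anti : ∀ s t : ℝ, M ≤ s → s ≤ t → pV t ≤ pV s)
    (hpV_int : Integrable (fun x : ℝ => pV |x|))
    (hpV_one : ∫ x : ℝ, pV |x| = 1) :
    ∃ K₀ > 0, ∃ δ > 0, ∀ K ≥ K₀, ∀ y : ℝ,
      δ ≤ ∫ x in {x : ℝ | |x - Function.invFun b y| ≤ K}, pV |y - b x| := by
  set r : ℝ := M / bminus with hr
  have hr_pos : 0 < r := div_pos hM hbminus
  set K₀ : ℝ := r + 1 with hK₀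
  have hK₀_pos : 0 < K₀ := by positivity
  have hb₁_pos : 0 < b₁ := lt_of_lt_of_le hbminus hb₁
  -- lower Lipschitz: bminus * (z - x) ≤ b z - b x for x ≤ z
  have hlowmono : Monotone (fun x => b x - bminus * x) := by
    apply monotone_of_deriv_nonneg
    · exact fun x => ((hb_deriv x).sub ((hasDerivAt_id x).const_mul bminus)).differentiableAt
    · intro x
      have hd : HasDerivAt (fun x => b x - bminus * x) (b' x - bminus * 1) x :=
        (hb_deriv x).sub ((hasDerivAt_id x).const_mul bminus)
      rw [hd.deriv]
      have := hb'_low x; linarith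
  have hupmono : Monotone (fun x => b₁ * x - b x) := by
    apply monotone_of_deriv_nonneg
    · exact fun x => (((hasDerivAt_id x).const_mul b₁).sub (hb_deriv x)).differentiableAt
    · intro x
      have hd : HasDerivAt (fun x => b₁ * x - b x) (b₁ * 1 - b' x) x :=
        ((hasDerivAt_id x).const_mul b₁).sub (hb_deriv x)
      rw [hd.deriv]
      have := hb'_up x; linarith
  have hlow : ∀ x z : ℝ, x ≤ z → bminus * (z - x) ≤ b z - b x := by
    intro x z hxz
    have := hlowmono hxz
    simp only at this; nlinarith
  have hup : ∀ x z : ℝ, x ≤ z → b z - b x ≤ b₁ * (z - x) := by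
    intro x z hxz
    have := hupmono hxz
    simp only at this; nlinarith
  -- measurability of the integrand
  have hb_cont : Continuous b := by
    rw [continuous_iff_continuousAt]
    exact fun x => (hb_deriv x).continuousAt
  have hg_lsc : LowerSemicontinuous (fun u : ℝ => pV |u|) := by
    intro u c hc
    have h := hpV_lsc |u| (abs_nonneg u) c hc
    have habs : Filter.Tendsto (fun v : ℝ => |v|) (nhds u) (nhdsWithin |u| (Set.Ici 0)) :=
      tendsto_nhdsWithin_of_tendsto_nhds_of_eventually_within _
        (continuous_abs.tendsto u) (Filter.Eventually.of_forall fun v => abs_nonneg v)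
    exact habs.eventually h
  have hg_meas : Measurable (fun u : ℝ => pV |u|) := hg_lsc.measurable
  set δ : ℝ := pV (b₁ * K₀) with hδ
  have hδ_pos : 0 < δ := hpV_pos _ (by positivity)
  refine ⟨K₀, hK₀_pos, δ, hδ_pos, fun K hK y => ?_⟩
  set x₀ : ℝ := Function.invFun b y with hx₀
  have hbx₀ : b x₀ = y := Function.rightInverse_invFun hb_bij.surjective y
  set f : ℝ → ℝ := fun x => pV |y - b x| with hf
  have hf_meas : Measurable f := hg_meas.comp (continuous_const.sub hb_cont).measurable
  have hf_nonneg : ∀ x, 0 ≤ f x := fun x => (hpV_pos _ (abs_nonneg _)).le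
  set S : Set ℝ := Set.Icc (x₀ + r) (x₀ + K₀) with hS
  set T : Set ℝ := {x : ℝ | |x - x₀| ≤ K} with hT
  have hTball : T = Metric.closedBall x₀ K := by
    ext x; simp [Metric.mem_closedBall, Real.dist_eq, hT]
  have hK_pos : 0 < K := lt_of_lt_of_le hK₀_pos hK
  have hST : S ⊆ T := by
    intro x hx
    obtain ⟨h1, h2⟩ := hx
    have : |x - x₀| = x - x₀ := abs_of_nonneg (by linarith [hr_pos.le])
    rw [Set.mem_setOf_eq, this]; linarith
  -- integrability on T
  obtain ⟨Bd, hBd⟩ := hpV_bdd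
  have hT_fin : volume T < ⊤ := by
    rw [hTball]
    exact lt_of_le_of_lt (measure_mono (Metric.closedBall_subset_ball (lt_add_one K)))
      measure_ball_lt_top
  have hT_meas : MeasurableSet T := by rw [hTball]; exact measurableSet_closedBall
  have hf_intT : IntegrableOn f T := by
    refine Integrable.mono' (g := fun _ => Bd) (integrableOn_const hT_fin.ne)
      (hf_meas.aestronglyMeasurable.restrict) ?_
    filter_upwards with x
    rw [Real.norm_eq_abs, abs_of_nonneg (hf_nonneg x)]
    exact hBd _ (abs_nonneg _)
  -- pointwise bound on S
  have hbound : ∀ x ∈ S, δ ≤ f x := by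
    intro x hx
    obtain ⟨h1, h2⟩ := hx
    have hx₀x : x₀ ≤ x := by linarith [hr_pos.le]
    have hbd1 : bminus * (x - x₀) ≤ b x - b x₀ := hlow _ _ hx₀x
    have hbd2 : b x - b x₀ ≤ b₁ * (x - x₀) := hup _ _ hx₀x
    have hMr : bminus * r = M := by rw [hr]; field_simp
    have hub : |y - b x| = b x - b x₀ := by
      rw [← hbx₀, abs_sub_comm, abs_of_nonneg (by nlinarith [hr_pos.le])]
    have hMle : M ≤ |y - b x| := by
      rw [hub]; nlinarith
    have hle : |y - b x| ≤ b₁ * K₀ := by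
      rw [hub]; nlinarith
    exact hpV_anti _ _ hMle hle
  have hS_meas : MeasurableSet S := measurableSet_Icc
  have step1 : δ ≤ ∫ x in S, f x := by
    have := setIntegral_mono_on (integrableOn_const (by
        rw [Real.volume_Icc]; exact ENNReal.ofReal_ne_top))
      (hf_intT.mono_set hST) hS_meas hbound
    rwa [setIntegral_const, Real.volume_real_Icc, show x₀ + K₀ - (x₀ + r) = 1 by ring,
      max_eq_left zero_le_one, one_smul] at this
  have step2 : ∫ x in S, f x ≤ ∫ x in T, f x :=
    setIntegral_mono_set hf_intT
      (Filter.Eventually.of_forall hf_nonneg)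
      (HasSubset.Subset.eventuallyLE hST)
  linarith
end

section
/- Assume Υ := ∫_0^∞ p_U(x)^{−1} p_V(b_− x) p_U(a_+ x)^{−1} dx < ∞. Then limsup_{K→∞} sup_{y∈ℝ} sup_{(x_0,x_2)∈ℝ×ℝ} I_K(x_0,x_2;y) < ∞. -/
open MeasureTheory
open scoped Classical

noncomputable section

/-- `C_K(y) = {x ∈ ℝ : |x − b⁻¹(y)| ≤ K}`. -/
def CKset (b : ℝ → ℝ) (K y : ℝ) : Set ℝ :=
  {x : ℝ | |x - Function.invFun b y| ≤ K}

/-- `h_{C_K(y)}(x) = 1` if `dist(x, a(C_K(y))) ≤ M`, and `= p_U(|x − a(b⁻¹(y))|)` otherwise. -/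
def hCfun (pU a b : ℝ → ℝ) (M K y x : ℝ) : ℝ :=
  if Metric.infDist x (a '' CKset b K y) ≤ M then 1 else pU |x - a (Function.invFun b y)|

/-- `k_{C_K(y)}(x) = 1` if `dist(a(x), C_K(y)) < M`, and `= p_U(|b⁻¹(y) − a(x)|)` otherwise. -/
def kCfun (pU a b : ℝ → ℝ) (M K y x : ℝ) : ℝ :=
  if Metric.infDist (a x) (CKset b K y) < M then 1 else pU |Function.invFun b y - a x|

/-- `I_K(x₀,x₂;y) = k_{C_K(y)}(x₀)⁻¹ h_{C_K(y)}(x₂)⁻¹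
∫_{ℝ∖C_K(y)} p_U(|x₁ − a(x₀)|) p_V(|y − b(x₁)|) p_U(|x₂ − a(x₁)|) dx₁`. -/
def IK (pU pV a b : ℝ → ℝ) (M K x₀ x₂ y : ℝ) : ℝ :=
  (kCfun pU a b M K y x₀)⁻¹ * (hCfun pU a b M K y x₂)⁻¹ *
    ∫ x₁ in (CKset b K y)ᶜ, pU |x₁ - a x₀| * pV |y - b x₁| * pU |x₂ - a x₁|


set_option maxHeartbeats 2000000 in
/-- If `Υ = ∫_0^∞ p_U(x)⁻¹ p_V(b₋ x) p_U(a₊ x)⁻¹ dx < ∞`, then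
`limsup_{K→∞} sup_y sup_{x₀,x₂} I_K(x₀,x₂;y) < ∞`. -/
theorem IK_uniformly_bounded
    (M γ aplus : ℝ) (hM : 0 < M) (hγ : 0 < γ)
    (pU : ℝ → ℝ)
    (hpU_pos : ∀ u, 0 ≤ u → 0 < pU u)
    (hpU_bdd : ∃ Bd : ℝ, ∀ u, 0 ≤ u → pU u ≤ Bd)
    (hpU_low : ∃ md > 0, ∀ u ∈ Set.Icc (0 : ℝ) M, md ≤ pU u)
    (hpU_anti : ∀ s t : ℝ, M ≤ s → s ≤ t → pU t ≤ pU s)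
    (hpU_mult : ∀ s t : ℝ, 0 ≤ s → 0 ≤ t → γ * pU s * pU t ≤ pU (s + t))
    (a : ℝ → ℝ) (haLip : ∀ x x' : ℝ, |a x - a x'| ≤ aplus * |x - x'|)
    (b : ℝ → ℝ) (b' : ℝ → ℝ) (bminus b₁ : ℝ) (hbminus : 0 < bminus) (hb₁ : bminus ≤ b₁)
    (hb_deriv : ∀ x, HasDerivAt b (b' x) x)
    (hb'_low : ∀ x, bminus ≤ b' x) (hb'_up : ∀ x, b' x ≤ b₁)
    (hb_bij : Function.Bijective b)
    (pV : ℝ → ℝ)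
    (hpV_pos : ∀ u, 0 ≤ u → 0 < pV u)
    (hpV_bdd : ∃ Bd : ℝ, ∀ u, 0 ≤ u → pV u ≤ Bd)
    (hpV_lsc : LowerSemicontinuousOn pV (Set.Ici 0))
    (hpV_anti : ∀ s t : ℝ, M ≤ s → s ≤ t → pV t ≤ pV s)
    (hpV_int : Integrable (fun x : ℝ => pV |x|))
    (hUpsilon : IntegrableOn
      (fun x : ℝ => (pU x)⁻¹ * pV (bminus * x) * (pU (aplus * x))⁻¹) (Set.Ioi 0)) :
    ∃ Cb : ℝ, ∃ K₀ : ℝ, ∀ K ≥ K₀, ∀ y x₀ x₂ : ℝ,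
      IK pU pV a b M K x₀ x₂ y ≤ Cb := by
  classical
  obtain ⟨BU0, hBU0⟩ := hpU_bdd
  set BU : ℝ := max BU0 1 with hBUdef
  have hBU1 : (1:ℝ) ≤ BU := le_max_right _ _
  have hBU_pos : (0:ℝ) < BU := lt_of_lt_of_le one_pos hBU1
  have hBUb : ∀ u : ℝ, 0 ≤ u → pU u ≤ BU := fun u hu => (hBU0 u hu).trans (le_max_left _ _)
  have haplus : 0 ≤ aplus := by
    have h := haLip 0 1
    have h2 : |(0:ℝ) - 1| = 1 := by norm_num
    rw [h2, mul_one] at h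
    exact le_trans (abs_nonneg _) h
  set c : ℝ := max γ⁻¹ (BU ^ 2) with hcdef
  have hc_pos : (0:ℝ) < c := lt_of_lt_of_le (by positivity : (0:ℝ) < BU ^ 2) (le_max_right _ _)
  set F : ℝ → ℝ := fun u => (pU u)⁻¹ * pV (bminus * u) * (pU (aplus * u))⁻¹ with hFdef
  have hΥF : IntegrableOn F (Set.Ioi (0:ℝ)) := hUpsilon
  have hF_nonneg : ∀ u : ℝ, 0 ≤ u → 0 ≤ F u := by
    intro u hu
    have h1 := hpU_pos u hu
    have h2 := hpV_pos (bminus * u) (by positivity)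
    have h3 := hpU_pos (aplus * u) (by positivity)
    have : F u = (pU u)⁻¹ * pV (bminus * u) * (pU (aplus * u))⁻¹ := rfl
    rw [this]; positivity
  set Υ : ℝ := ∫ x in Set.Ioi (0:ℝ), F x with hΥdef
  refine ⟨c ^ 2 * (2 * Υ), max M (M / bminus), fun K hK y x₀ x₂ => ?_⟩
  rw [ge_iff_le, max_le_iff] at hK
  have hKM : M ≤ K := hK.1
  have hK0 : 0 < K := lt_of_lt_of_le hM hKM
  have hKb : M ≤ bminus * K := by
    have h1 : M / bminus ≤ K := hK.2
    calc M = bminus * (M / bminus) := by field_simp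
      _ ≤ bminus * K := by
          exact mul_le_mul_of_nonneg_left h1 hbminus.le
  unfold IK
  set z : ℝ := Function.invFun b y with hzdef
  have hbz : b z = y := Function.rightInverse_invFun hb_bij.2 y
  -- growth of b
  have hbmono : ∀ x x' : ℝ, x' ≤ x → bminus * (x - x') ≤ b x - b x' := by
    intro x x' hxx
    have hg : ∀ t : ℝ, HasDerivAt (fun s => b s - bminus * s) (b' t - bminus) t := by
      intro t
      exact ((hb_deriv t).sub ((hasDerivAt_id t).const_mul bminus)).congr_deriv (by ring)
    have hmono : Monotone fun s => b s - bminus * s := by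
      apply monotone_of_deriv_nonneg
      · exact fun t => (hg t).differentiableAt
      · intro t
        rw [(hg t).deriv]
        linarith [hb'_low t]
    have h1 := hmono hxx
    simp only at h1
    linarith
  have hbgrow : ∀ x : ℝ, bminus * |x - z| ≤ |b x - y| := by
    intro x
    rcases le_total z x with hzx | hxz
    · have h1 := hbmono x z hzx
      have h0 : (0:ℝ) ≤ bminus * (x - z) := mul_nonneg hbminus.le (by linarith)
      rw [abs_of_nonneg (by linarith : (0:ℝ) ≤ x - z), ← hbz,
        abs_of_nonneg (by linarith : (0:ℝ) ≤ b x - b z)]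
      exact h1
    · have h1 := hbmono z x hxz
      have h0 : (0:ℝ) ≤ bminus * (z - x) := mul_nonneg hbminus.le (by linarith)
      rw [abs_of_nonpos (by linarith : x - z ≤ 0), ← hbz,
        abs_of_nonpos (by linarith : b x - b z ≤ 0)]
      calc bminus * -(x - z) = bminus * (z - x) := by ring
        _ ≤ b z - b x := h1
        _ = -(b x - b z) := by ring
  have hz_mem : z ∈ CKset b K y := by
    simp only [CKset, Set.mem_setOf_eq, ← hzdef, sub_self, abs_zero]
    exact hK0.le
  have hk_pos : 0 < kCfun pU a b M K y x₀ := by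
    unfold kCfun
    split
    · exact one_pos
    · exact hpU_pos _ (abs_nonneg _)
  have hh_pos : 0 < hCfun pU a b M K y x₂ := by
    unfold hCfun
    split
    · exact one_pos
    · exact hpU_pos _ (abs_nonneg _)
  have hCKeq : CKset b K y = Metric.closedBall z K := by
    ext x
    simp [CKset, Metric.mem_closedBall, Real.dist_eq, ← hzdef]
  have hs_meas : MeasurableSet ((CKset b K y)ᶜ) := by
    rw [hCKeq]; exact measurableSet_closedBall.compl
  have hs_eq : (CKset b K y)ᶜ = Set.Iio (z - K) ∪ Set.Ioi (z + K) := by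
    rw [hCKeq]
    ext x
    simp only [Set.mem_compl_iff, Metric.mem_closedBall, Real.dist_eq, not_le,
      Set.mem_union, Set.mem_Iio, Set.mem_Ioi, lt_abs]
    constructor
    · rintro (h | h)
      · right; linarith
      · left; linarith
    · rintro (h | h)
      · right; linarith
      · left; linarith
  -- pointwise bound
  have hpoint : ∀ x₁ ∈ (CKset b K y)ᶜ,
      pU |x₁ - a x₀| * pV |y - b x₁| * pU |x₂ - a x₁| ≤
        c ^ 2 * kCfun pU a b M K y x₀ * hCfun pU a b M K y x₂ * F |x₁ - z| := by
    intro x₁ hx₁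
    have hu : K < |x₁ - z| := by
      simp only [CKset, Set.mem_compl_iff, Set.mem_setOf_eq, not_le, ← hzdef] at hx₁
      exact hx₁
    set u : ℝ := |x₁ - z| with hudef
    have hu0 : 0 ≤ u := abs_nonneg _
    have hau0 : 0 ≤ aplus * u := by positivity
    have hpUu : 0 < pU u := hpU_pos _ hu0
    have hpUau : 0 < pU (aplus * u) := hpU_pos _ hau0
    have hpUuB : pU u ≤ BU := hBUb _ hu0
    have hpUauB : pU (aplus * u) ≤ BU := hBUb _ hau0
    -- bound A
    have hA : pU |x₁ - a x₀| ≤ c * kCfun pU a b M K y x₀ * (pU u)⁻¹ := by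
      by_cases hcase : Metric.infDist (a x₀) (CKset b K y) < M
      · unfold kCfun
        rw [if_pos hcase, mul_one]
        calc pU |x₁ - a x₀| ≤ BU := hBUb _ (abs_nonneg _)
          _ ≤ BU ^ 2 * (pU u)⁻¹ := by
              rw [show BU ^ 2 * (pU u)⁻¹ = BU ^ 2 / pU u from by rw [div_eq_mul_inv],
                le_div_iff₀ hpUu]
              nlinarith [hpUuB, hBU_pos]
          _ ≤ c * (pU u)⁻¹ := by
              have := le_max_right γ⁻¹ (BU ^ 2)
              exact mul_le_mul_of_nonneg_right this (inv_nonneg.2 hpUu.le)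
      · unfold kCfun
        rw [if_neg hcase, ← hzdef]
        push_neg at hcase
        have hMdist : M ≤ |z - a x₀| := by
          have h1 : Metric.infDist (a x₀) (CKset b K y) ≤ dist (a x₀) z :=
            Metric.infDist_le_dist_of_mem hz_mem
          rw [Real.dist_eq] at h1
          rw [abs_sub_comm]
          exact le_trans hcase h1
        have hsum : |z - a x₀| ≤ u + |x₁ - a x₀| := by
          calc |z - a x₀| ≤ |z - x₁| + |x₁ - a x₀| := abs_sub_le _ _ _
            _ = u + |x₁ - a x₀| := by rw [abs_sub_comm z x₁]
        have h2 : γ * pU u * pU |x₁ - a x₀| ≤ pU |z - a x₀| :=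
          le_trans (hpU_mult u |x₁ - a x₀| hu0 (abs_nonneg _))
            (hpU_anti _ _ hMdist hsum)
        have key : pU |x₁ - a x₀| ≤ γ⁻¹ * pU |z - a x₀| * (pU u)⁻¹ := by
          rw [show γ⁻¹ * pU |z - a x₀| * (pU u)⁻¹ = pU |z - a x₀| / (γ * pU u) by
            rw [div_eq_mul_inv, mul_inv]; ring]
          rw [le_div_iff₀ (by positivity)]
          nlinarith [h2]
        refine key.trans ?_
        have := le_max_left γ⁻¹ (BU ^ 2)
        exact mul_le_mul_of_nonneg_right
          (mul_le_mul_of_nonneg_right this (hpU_pos _ (abs_nonneg _)).le)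
          (inv_nonneg.2 hpUu.le)
    -- bound C
    have hC : pU |x₂ - a x₁| ≤ c * hCfun pU a b M K y x₂ * (pU (aplus * u))⁻¹ := by
      by_cases hcase : Metric.infDist x₂ (a '' CKset b K y) ≤ M
      · unfold hCfun
        rw [if_pos hcase, mul_one]
        calc pU |x₂ - a x₁| ≤ BU := hBUb _ (abs_nonneg _)
          _ ≤ BU ^ 2 * (pU (aplus * u))⁻¹ := by
              rw [show BU ^ 2 * (pU (aplus * u))⁻¹ = BU ^ 2 / pU (aplus * u) from by
                rw [div_eq_mul_inv], le_div_iff₀ hpUau]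
              nlinarith [hpUauB, hBU_pos]
          _ ≤ c * (pU (aplus * u))⁻¹ := by
              have := le_max_right γ⁻¹ (BU ^ 2)
              exact mul_le_mul_of_nonneg_right this (inv_nonneg.2 hpUau.le)
      · unfold hCfun
        rw [if_neg hcase, ← hzdef]
        push_neg at hcase
        have haz_mem : a z ∈ a '' CKset b K y := ⟨z, hz_mem, rfl⟩
        have hMdist : M ≤ |x₂ - a z| := by
          have h1 : Metric.infDist x₂ (a '' CKset b K y) ≤ dist x₂ (a z) :=
            Metric.infDist_le_dist_of_mem haz_mem
          rw [Real.dist_eq] at h1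
          exact le_trans hcase.le h1
        have hsum : |x₂ - a z| ≤ |x₂ - a x₁| + aplus * u := by
          calc |x₂ - a z| ≤ |x₂ - a x₁| + |a x₁ - a z| := abs_sub_le _ _ _
            _ ≤ |x₂ - a x₁| + aplus * u := by
                have := haLip x₁ z
                linarith
        have h2 : γ * pU |x₂ - a x₁| * pU (aplus * u) ≤ pU |x₂ - a z| :=
          le_trans (hpU_mult _ _ (abs_nonneg _) hau0)
            (hpU_anti _ _ hMdist hsum)
        have key : pU |x₂ - a x₁| ≤ γ⁻¹ * pU |x₂ - a z| * (pU (aplus * u))⁻¹ := by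
          rw [show γ⁻¹ * pU |x₂ - a z| * (pU (aplus * u))⁻¹
              = pU |x₂ - a z| / (γ * pU (aplus * u)) by
            rw [div_eq_mul_inv, mul_inv]; ring]
          rw [le_div_iff₀ (by positivity)]
          nlinarith [h2]
        refine key.trans ?_
        have := le_max_left γ⁻¹ (BU ^ 2)
        exact mul_le_mul_of_nonneg_right
          (mul_le_mul_of_nonneg_right this (hpU_pos _ (abs_nonneg _)).le)
          (inv_nonneg.2 hpUau.le)
    -- bound B
    have hB : pV |y - b x₁| ≤ pV (bminus * u) := by
      have h1 : bminus * u ≤ |y - b x₁| := by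
        rw [hudef, abs_sub_comm y (b x₁)]
        exact hbgrow x₁
      refine hpV_anti _ _ ?_ h1
      calc M ≤ bminus * K := hKb
        _ ≤ bminus * u := mul_le_mul_of_nonneg_left hu.le hbminus.le
    -- combine
    have hstep : pU |x₁ - a x₀| * pV |y - b x₁| * pU |x₂ - a x₁| ≤
        (c * kCfun pU a b M K y x₀ * (pU u)⁻¹) * pV (bminus * u) *
          (c * hCfun pU a b M K y x₂ * (pU (aplus * u))⁻¹) := by
      have n1 : 0 ≤ pV |y - b x₁| := (hpV_pos _ (abs_nonneg _)).le
      have n2 : 0 ≤ c * kCfun pU a b M K y x₀ * (pU u)⁻¹ := by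
        have := hk_pos
        positivity
      have n3 : 0 ≤ pU |x₁ - a x₀| := (hpU_pos _ (abs_nonneg _)).le
      have n4 : 0 ≤ pU |x₂ - a x₁| := (hpU_pos _ (abs_nonneg _)).le
      exact mul_le_mul (mul_le_mul hA hB n1 n2) hC n4
        (mul_nonneg n2 (hpV_pos (bminus * u) (by positivity)).le)
    refine hstep.trans ?_
    have : (c * kCfun pU a b M K y x₀ * (pU u)⁻¹) * pV (bminus * u) *
          (c * hCfun pU a b M K y x₂ * (pU (aplus * u))⁻¹)
        = c ^ 2 * kCfun pU a b M K y x₀ * hCfun pU a b M K y x₂ * F u := by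
      show _ = c ^ 2 * kCfun pU a b M K y x₀ * hCfun pU a b M K y x₂ *
        ((pU u)⁻¹ * pV (bminus * u) * (pU (aplus * u))⁻¹)
      ring
    rw [this]
  -- integrability of the comparison function
  have hmp_add := measurePreserving_add_right (volume : Measure ℝ) z
  have hme_add : MeasurableEmbedding (fun x : ℝ => x + z) :=
    (MeasurableEquiv.addRight z).measurableEmbedding
  have hmp_sub := Measure.measurePreserving_sub_left (volume : Measure ℝ) z
  have hme_sub : MeasurableEmbedding (fun x : ℝ => z - x) :=
    (MeasurableEquiv.subLeft z).measurableEmbedding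
  have hpre_add : (fun x : ℝ => x + z) ⁻¹' Set.Ioi (z + K) = Set.Ioi K := by
    ext x
    simp only [Set.mem_preimage, Set.mem_Ioi]
    constructor <;> intro h <;> linarith
  have hpre_sub : (fun x : ℝ => z - x) ⁻¹' Set.Iio (z - K) = Set.Ioi K := by
    ext x
    simp only [Set.mem_preimage, Set.mem_Iio, Set.mem_Ioi]
    constructor <;> intro h <;> linarith
  have hFK : IntegrableOn F (Set.Ioi K) := hΥF.mono_set (Set.Ioi_subset_Ioi hK0.le)
  have hint_right : IntegrableOn (fun x => F |x - z|) (Set.Ioi (z + K)) := by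
    have h1 : IntegrableOn ((fun w => F |w - z|) ∘ fun x : ℝ => x + z)
        ((fun x : ℝ => x + z) ⁻¹' Set.Ioi (z + K)) := by
      rw [hpre_add]
      apply hFK.congr_fun ?_ measurableSet_Ioi
      intro x hx
      simp only [Function.comp, add_sub_cancel_right]
      rw [abs_of_pos (lt_trans hK0 hx)]
    exact (hmp_add.integrableOn_comp_preimage hme_add).1 h1
  have hint_left : IntegrableOn (fun x => F |x - z|) (Set.Iio (z - K)) := by
    have h1 : IntegrableOn ((fun w => F |w - z|) ∘ fun x : ℝ => z - x)
        ((fun x : ℝ => z - x) ⁻¹' Set.Iio (z - K)) := by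
      rw [hpre_sub]
      apply hFK.congr_fun ?_ measurableSet_Ioi
      intro x hx
      simp only [Function.comp]
      rw [show z - x - z = -x by ring, abs_neg, abs_of_pos (lt_trans hK0 hx)]
    exact (hmp_sub.integrableOn_comp_preimage hme_sub).1 h1
  have hint_g : IntegrableOn (fun x => F |x - z|) ((CKset b K y)ᶜ) := by
    rw [hs_eq]
    exact hint_left.union hint_right
  -- integral values
  have hIoiK_le : ∫ x in Set.Ioi K, F x ≤ Υ := by
    rw [hΥdef]
    apply setIntegral_mono_set hΥF
    · exact (ae_restrict_iff' measurableSet_Ioi).2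
        (Filter.Eventually.of_forall fun x hx => hF_nonneg x hx.le)
    · exact HasSubset.Subset.eventuallyLE (Set.Ioi_subset_Ioi hK0.le)
  have hval_right : ∫ x in Set.Ioi (z + K), F |x - z| = ∫ x in Set.Ioi K, F x := by
    have h1 := hmp_add.setIntegral_preimage_emb hme_add (fun w => F |w - z|) (Set.Ioi (z + K))
    rw [hpre_add] at h1
    rw [← h1]
    apply setIntegral_congr_fun measurableSet_Ioi
    intro x hx
    simp only [add_sub_cancel_right]
    rw [abs_of_pos (lt_trans hK0 hx)]
  have hval_left : ∫ x in Set.Iio (z - K), F |x - z| = ∫ x in Set.Ioi K, F x := by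
    have h1 := hmp_sub.setIntegral_preimage_emb hme_sub (fun w => F |w - z|) (Set.Iio (z - K))
    rw [hpre_sub] at h1
    rw [← h1]
    apply setIntegral_congr_fun measurableSet_Ioi
    intro x hx
    show F |z - x - z| = F x
    rw [show z - x - z = -x by ring, abs_neg, abs_of_pos (lt_trans hK0 hx)]
  have hsplit : ∫ x in (CKset b K y)ᶜ, F |x - z| ≤ 2 * Υ := by
    rw [hs_eq]
    rw [setIntegral_union (by
        apply Set.disjoint_left.2
        intro x hx hx'
        simp only [Set.mem_Iio] at hx
        simp only [Set.mem_Ioi] at hx'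
        linarith) measurableSet_Ioi hint_left hint_right]
    rw [hval_left, hval_right]
    linarith [hIoiK_le]
  -- main integral comparison
  have hIle : (∫ x₁ in (CKset b K y)ᶜ, pU |x₁ - a x₀| * pV |y - b x₁| * pU |x₂ - a x₁|)
      ≤ ∫ x₁ in (CKset b K y)ᶜ,
          c ^ 2 * kCfun pU a b M K y x₀ * hCfun pU a b M K y x₂ * F |x₁ - z| := by
    apply integral_mono_of_nonneg
    · exact Filter.Eventually.of_forall fun x =>
        mul_nonneg (mul_nonneg (hpU_pos _ (abs_nonneg _)).le (hpV_pos _ (abs_nonneg _)).le)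
          (hpU_pos _ (abs_nonneg _)).le
    · exact hint_g.const_mul _
    · exact (ae_restrict_iff' hs_meas).2 (Filter.Eventually.of_forall hpoint)
  have hconst : ∫ x₁ in (CKset b K y)ᶜ,
      c ^ 2 * kCfun pU a b M K y x₀ * hCfun pU a b M K y x₂ * F |x₁ - z|
      = c ^ 2 * kCfun pU a b M K y x₀ * hCfun pU a b M K y x₂ *
        ∫ x₁ in (CKset b K y)ᶜ, F |x₁ - z| :=
    integral_const_mul _ _
  -- final assembly
  set k := kCfun pU a b M K y x₀
  set h := hCfun pU a b M K y x₂
  have hfin : k⁻¹ * h⁻¹ * (∫ x₁ in (CKset b K y)ᶜ,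
      pU |x₁ - a x₀| * pV |y - b x₁| * pU |x₂ - a x₁|) ≤
      k⁻¹ * h⁻¹ * (c ^ 2 * k * h * (2 * Υ)) := by
    apply mul_le_mul_of_nonneg_left ?_ (by positivity)
    calc (∫ x₁ in (CKset b K y)ᶜ, pU |x₁ - a x₀| * pV |y - b x₁| * pU |x₂ - a x₁|)
        ≤ c ^ 2 * k * h * ∫ x₁ in (CKset b K y)ᶜ, F |x₁ - z| := by
          rw [← hconst]; exact hIle
      _ ≤ c ^ 2 * k * h * (2 * Υ) := by
          apply mul_le_mul_of_nonneg_left hsplit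
          positivity
  refine hfin.trans ?_
  have hkne : k ≠ 0 := hk_pos.ne'
  have hhne : h ≠ 0 := hh_pos.ne'
  rw [show k⁻¹ * h⁻¹ * (c ^ 2 * k * h * (2 * Υ)) = (k⁻¹ * k) * (h⁻¹ * h) * (c ^ 2 * (2 * Υ)) by
    ring]
  rw [inv_mul_cancel₀ hkne, inv_mul_cancel₀ hhne, one_mul, one_mul]

end
end

section
/- Let Z be a real-valued random variable with probability density function f with respect to Lebesgue measure such that log f is twice differentiable and satisfies (log f)''(x) ≤ −c for all x ∈ ℝ, where c > 0. Then Z is square integrable and Var(Z) ≤ c^{−1}. -/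
open MeasureTheory Real Filter

/-- If `Z` has density `f` with `(log f)'' ≤ −c < 0` everywhere, then `Z`
is square integrable and `Var(Z) ≤ c⁻¹`. -/
theorem variance_le_of_strongly_unimodal
    (f : ℝ → ℝ) (hf_pos : ∀ x, 0 < f x)
    (hf_int : Integrable f) (hf_one : ∫ x, f x = 1)
    (c : ℝ) (hc : 0 < c)
    (l' l'' : ℝ → ℝ)
    (hl' : ∀ x, HasDerivAt (fun t => Real.log (f t)) (l' x) x)
    (hl'' : ∀ x, HasDerivAt l' (l'' x) x)
    (hcurv : ∀ x, l'' x ≤ -c) :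
    Integrable (fun x => x ^ 2 * f x) ∧
      ∫ x, (x - ∫ t, t * f t) ^ 2 * f x ≤ c⁻¹ := by
  -- derivative of f itself
  have hf_deriv : ∀ x, HasDerivAt f (l' x * f x) x := by
    intro x
    have h := (hl' x).exp
    have he : (fun t => Real.exp (Real.log (f t))) = f :=
      funext fun t => Real.exp_log (hf_pos t)
    rw [he, Real.exp_log (hf_pos x), mul_comm] at h
    exact h
  have hf_diff : Differentiable ℝ f := fun x => (hf_deriv x).differentiableAt
  have hf_cont : Continuous f := hf_diff.continuous
  have hl'_diff : Differentiable ℝ l' := fun x => (hl'' x).differentiableAt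
  have hl'_cont : Continuous l' := hl'_diff.continuous
  -- antitonicity of l' + c(· - x₀)
  have hq : ∀ x₀ : ℝ, Antitone fun y => l' y + c * (y - x₀) := by
    intro x₀
    have hqd : ∀ y, HasDerivAt (fun y => l' y + c * (y - x₀)) (l'' y + c) y := by
      intro y
      have h2 : HasDerivAt (fun y : ℝ => c * (y - x₀)) (c * 1) y :=
        ((hasDerivAt_id y).sub_const x₀).const_mul c
      exact ((hl'' y).add h2).congr_deriv (by ring)
    refine antitone_of_deriv_nonpos (fun y => (hqd y).differentiableAt) fun y => ?_
    rw [(hqd y).deriv]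
    linarith [hcurv y]
  -- Gaussian upper bound on f
  set K : ℝ := f 0 * Real.exp ((l' 0) ^ 2 / c) with hK
  have hK_pos : 0 < K := mul_pos (hf_pos 0) (Real.exp_pos _)
  have hgauss : ∀ x, f x ≤ K * Real.exp (-(c / 4) * x ^ 2) := by
    have hphid : ∀ y, HasDerivAt
        (fun y => Real.log (f y) - l' 0 * y + c / 2 * y ^ 2)
        (l' y - l' 0 + c * y) y := by
      intro y
      have h1 := ((hl' y).sub ((hasDerivAt_id y).const_mul (l' 0))).add
        (((hasDerivAt_id y).pow 2).const_mul (c / 2))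
      refine h1.congr_deriv ?_
      simp; ring
    have hphid_diff : Differentiable ℝ fun y => Real.log (f y) - l' 0 * y + c / 2 * y ^ 2 :=
      fun y => (hphid y).differentiableAt
    have hsign : ∀ y : ℝ, 0 ≤ y → l' y - l' 0 + c * y ≤ 0 := by
      intro y hy
      have h := hq 0 hy
      simp only [sub_zero] at h
      linarith
    have hsign' : ∀ y : ℝ, y ≤ 0 → 0 ≤ l' y - l' 0 + c * y := by
      intro y hy
      have h := hq 0 hy
      simp only [sub_zero] at h
      linarith
    have hanti : AntitoneOn (fun y => Real.log (f y) - l' 0 * y + c / 2 * y ^ 2)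
        (Set.Ici (0 : ℝ)) := by
      refine antitoneOn_of_deriv_nonpos (convex_Ici 0)
        (hphid_diff.continuous.continuousOn)
        (hphid_diff.differentiableOn) fun y hy => ?_
      rw [(hphid y).deriv]
      rw [interior_Ici] at hy
      exact hsign y (le_of_lt hy)
    have hmono : MonotoneOn (fun y => Real.log (f y) - l' 0 * y + c / 2 * y ^ 2)
        (Set.Iic (0 : ℝ)) := by
      refine monotoneOn_of_deriv_nonneg (convex_Iic 0)
        (hphid_diff.continuous.continuousOn)
        (hphid_diff.differentiableOn) fun y hy => ?_
      rw [(hphid y).deriv]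
      rw [interior_Iic] at hy
      exact hsign' y (le_of_lt hy)
    have hphi_le : ∀ x : ℝ, Real.log (f x) - l' 0 * x + c / 2 * x ^ 2 ≤ Real.log (f 0) := by
      intro x
      rcases le_total 0 x with h | h
      · have := hanti (Set.self_mem_Ici) h h
        simpa using this
      · have := hmono (Set.mem_Iic.mpr h) Set.self_mem_Iic h
        simpa using this
    intro x
    have hcD : c * (l' 0 ^ 2 / c) = l' 0 ^ 2 := mul_div_cancel₀ _ (ne_of_gt hc)
    have hsq := sq_nonneg (l' 0 - c / 2 * x)
    have hAM : l' 0 * x - c / 2 * x ^ 2 ≤ l' 0 ^ 2 / c - c / 4 * x ^ 2 := by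
      nlinarith [sq_nonneg x, mul_pos hc hc]
    calc f x = Real.exp (Real.log (f x)) := (Real.exp_log (hf_pos x)).symm
      _ ≤ Real.exp (Real.log (f 0) + l' 0 ^ 2 / c + -(c / 4) * x ^ 2) := by
          apply Real.exp_le_exp.mpr
          have := hphi_le x
          linarith
      _ = K * Real.exp (-(c / 4) * x ^ 2) := by
          rw [Real.exp_add, Real.exp_add, Real.exp_log (hf_pos 0)]
  -- set M
  set M : ℝ := ∫ t, t * f t with hM
  -- key pointwise inequality
  have key : ∀ x, c * ((x - M) ^ 2 * f x)
      ≤ l' M * ((x - M) * f x) - (x - M) * (l' x * f x) := by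
    intro x
    have hfx := (hf_pos x).le
    have h1 := hq M
    rcases le_total M x with h | h
    · have := h1 h
      simp only [sub_self, mul_zero, add_zero] at this
      nlinarith [mul_le_mul_of_nonneg_right (sub_nonneg.mpr h) hfx]
    · have := h1 h
      simp only [sub_self, mul_zero, add_zero] at this
      nlinarith [mul_le_mul_of_nonneg_right (sub_nonneg.mpr h) hfx]
  -- quantitative bound on x^2 f
  have hx2b : ∀ x : ℝ, x ^ 2 * f x ≤ K * (8 / c) * Real.exp (-(c / 8) * x ^ 2) := by
    intro x
    have h1 : c / 8 * x ^ 2 ≤ Real.exp (c / 8 * x ^ 2) := by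
      have := Real.add_one_le_exp (c / 8 * x ^ 2)
      linarith
    have h2 : x ^ 2 ≤ 8 / c * Real.exp (c / 8 * x ^ 2) := by
      calc x ^ 2 = 8 / c * (c / 8 * x ^ 2) := by field_simp
        _ ≤ 8 / c * Real.exp (c / 8 * x ^ 2) :=
            mul_le_mul_of_nonneg_left h1 (by positivity)
    calc x ^ 2 * f x ≤ x ^ 2 * (K * Real.exp (-(c / 4) * x ^ 2)) :=
          mul_le_mul_of_nonneg_left (hgauss x) (sq_nonneg x)
      _ ≤ (8 / c * Real.exp (c / 8 * x ^ 2)) * (K * Real.exp (-(c / 4) * x ^ 2)) :=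
          mul_le_mul_of_nonneg_right h2 (by positivity)
      _ = K * (8 / c) * (Real.exp (c / 8 * x ^ 2) * Real.exp (-(c / 4) * x ^ 2)) := by ring
      _ = K * (8 / c) * Real.exp (-(c / 8) * x ^ 2) := by
          rw [← Real.exp_add]; congr 1; ring_nf
  -- integrability of x^2 f
  have hx2f_int : Integrable fun x => x ^ 2 * f x := by
    refine Integrable.mono'
      ((integrable_exp_neg_mul_sq (b := c / 8) (by positivity)).const_mul (K * (8 / c)))
      ((continuous_pow 2).mul hf_cont).aestronglyMeasurable ?_
    filter_upwards with x
    rw [Real.norm_eq_abs, abs_of_nonneg (mul_nonneg (sq_nonneg x) (hf_pos x).le)]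
    exact hx2b x
  have hxf_int : Integrable fun x => x * f x := by
    refine Integrable.mono' (hf_int.add hx2f_int)
      (continuous_id.mul hf_cont).aestronglyMeasurable ?_
    filter_upwards with x
    rw [Real.norm_eq_abs, abs_mul, abs_of_nonneg (hf_pos x).le]
    have habs : |x| ≤ 1 + x ^ 2 := by nlinarith [sq_nonneg (|x| - 1), sq_abs x, abs_nonneg x]
    calc |x| * f x ≤ (1 + x ^ 2) * f x := mul_le_mul_of_nonneg_right habs (hf_pos x).le
      _ = f x + x ^ 2 * f x := by ring
  have hsq_int : Integrable fun x => (x - M) ^ 2 * f x := by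
    have h : (fun x => (x - M) ^ 2 * f x)
        = fun x => x ^ 2 * f x + (-(2 * M)) * (x * f x) + M ^ 2 * f x :=
      funext fun x => by ring
    rw [h]
    exact (hx2f_int.add ((hxf_int.const_mul _))).add (hf_int.const_mul _)
  have hMf_int : Integrable fun x => (x - M) * f x := by
    have h : (fun x => (x - M) * f x) = fun x => x * f x + (-M) * f x :=
      funext fun x => by ring
    rw [h]
    exact hxf_int.add (hf_int.const_mul _)
  -- centered first moment vanishes
  have hMint : ∫ x, (x - M) * f x = 0 := by
    have h : (fun x => (x - M) * f x) = fun x => x * f x - M * f x :=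
      funext fun x => by ring
    rw [h, integral_sub hxf_int (hf_int.const_mul M), integral_const_mul, hf_one]
    simp [hM]
  -- boundary terms tend to 0
  have hexp_tendsto : ∀ b : ℝ, 0 < b →
      Tendsto (fun x : ℝ => Real.exp (-b * x ^ 2)) atTop (nhds 0) := by
    intro b hb
    apply Real.tendsto_exp_atBot.comp
    exact Tendsto.const_mul_atTop_of_neg (by linarith) (tendsto_pow_atTop two_ne_zero)
  have hGt : Tendsto (fun R : ℝ => (1 + |M|) * (K * Real.exp (-(c / 4) * R ^ 2))
      + K * (8 / c) * Real.exp (-(c / 8) * R ^ 2)) atTop (nhds 0) := by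
    have h1 := (((hexp_tendsto (c / 4) (by positivity)).const_mul K).const_mul (1 + |M|))
    have h2 := (hexp_tendsto (c / 8) (by positivity)).const_mul (K * (8 / c))
    have := h1.add h2
    simpa using this
  have habs_bd : ∀ x : ℝ, |x - M| * f x ≤ (1 + |M|) * (K * Real.exp (-(c / 4) * x ^ 2))
      + K * (8 / c) * Real.exp (-(c / 8) * x ^ 2) := by
    intro x
    have h1 : |x - M| ≤ (1 + |M|) + x ^ 2 := by
      have h2 := abs_sub x M
      have h3 : |x| ≤ 1 + x ^ 2 := by nlinarith [sq_nonneg (|x| - 1), sq_abs x, abs_nonneg x]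
      linarith
    calc |x - M| * f x ≤ ((1 + |M|) + x ^ 2) * f x :=
          mul_le_mul_of_nonneg_right h1 (hf_pos x).le
      _ = (1 + |M|) * f x + x ^ 2 * f x := by ring
      _ ≤ (1 + |M|) * (K * Real.exp (-(c / 4) * x ^ 2))
          + K * (8 / c) * Real.exp (-(c / 8) * x ^ 2) := by
          refine add_le_add (mul_le_mul_of_nonneg_left (hgauss x) (by positivity)) (hx2b x)
  have hbd_top : Tendsto (fun R => (R - M) * f R) atTop (nhds 0) := by
    refine squeeze_zero_norm (fun R => ?_) hGt
    rw [Real.norm_eq_abs, abs_mul, abs_of_nonneg (hf_pos R).le]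
    exact habs_bd R
  have hbd_bot : Tendsto (fun R => ((-R) - M) * f (-R)) atTop (nhds 0) := by
    refine squeeze_zero_norm (fun R => ?_) hGt
    rw [Real.norm_eq_abs, abs_mul, abs_of_nonneg (hf_pos (-R)).le]
    have := habs_bd (-R)
    rw [neg_sq] at this
    exact this
  -- integration by parts on [-R, R]
  have hIBP : ∀ R : ℝ, ∫ x in (-R)..R, (f x + (x - M) * (l' x * f x))
      = (R - M) * f R - ((-R) - M) * f (-R) := by
    intro R
    refine intervalIntegral.integral_eq_sub_of_hasDerivAt
      (f := fun x => (x - M) * f x) (fun x _ => ?_) ?_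
    · have := ((hasDerivAt_id x).sub_const M).mul (hf_deriv x)
      exact this.congr_deriv (by simp)
    · exact (hf_cont.add (((continuous_id.sub continuous_const).mul
        (hl'_cont.mul hf_cont)))).intervalIntegrable _ _
  -- interval inequality for R ≥ 0
  have hineq : ∀ R : ℝ, 0 ≤ R →
      c * ∫ x in (-R)..R, (x - M) ^ 2 * f x
        ≤ l' M * (∫ x in (-R)..R, (x - M) * f x)
          - (((R - M) * f R - ((-R) - M) * f (-R)) - ∫ x in (-R)..R, f x) := by
    intro R hR
    have hab : -R ≤ R := by linarith
    have c2 : Continuous fun x => (x - M) * (l' x * f x) :=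
      (continuous_id.sub continuous_const).mul (hl'_cont.mul hf_cont)
    have c3 : Continuous fun x => l' M * ((x - M) * f x) :=
      continuous_const.mul ((continuous_id.sub continuous_const).mul hf_cont)
    have c1 : Continuous fun x => c * ((x - M) ^ 2 * f x) :=
      continuous_const.mul (((continuous_id.sub continuous_const).pow 2).mul hf_cont)
    have h1 : ∫ x in (-R)..R, c * ((x - M) ^ 2 * f x)
        ≤ ∫ x in (-R)..R, (l' M * ((x - M) * f x) - (x - M) * (l' x * f x)) :=
      intervalIntegral.integral_mono_on hab (c1.intervalIntegrable _ _)
        ((c3.sub c2).intervalIntegrable _ _) fun x _ => key x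
    rw [intervalIntegral.integral_const_mul,
      intervalIntegral.integral_sub (c3.intervalIntegrable _ _) (c2.intervalIntegrable _ _),
      intervalIntegral.integral_const_mul] at h1
    have h2 : ∫ x in (-R)..R, (x - M) * (l' x * f x)
        = ((R - M) * f R - ((-R) - M) * f (-R)) - ∫ x in (-R)..R, f x := by
      have h3 := hIBP R
      rw [intervalIntegral.integral_add (hf_cont.intervalIntegrable _ _)
        (c2.intervalIntegrable _ _)] at h3
      linarith
    linarith
  -- pass to the limit
  have hlim1 : Tendsto (fun R : ℝ => c * ∫ x in (-R)..R, (x - M) ^ 2 * f x) atTop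
      (nhds (c * ∫ x, (x - M) ^ 2 * f x)) := by
    exact (intervalIntegral_tendsto_integral hsq_int tendsto_neg_atTop_atBot
      tendsto_id).const_mul c
  have hlim2 : Tendsto (fun R : ℝ =>
      l' M * (∫ x in (-R)..R, (x - M) * f x)
        - (((R - M) * f R - ((-R) - M) * f (-R)) - ∫ x in (-R)..R, f x)) atTop
      (nhds (l' M * 0 - ((0 - 0) - 1))) := by
    refine Tendsto.sub ?_ (Tendsto.sub (Tendsto.sub hbd_top hbd_bot) ?_)
    · have h := (intervalIntegral_tendsto_integral hMf_int tendsto_neg_atTop_atBot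
        tendsto_id).const_mul (l' M)
      rwa [hMint] at h
    · rw [← hf_one]
      exact intervalIntegral_tendsto_integral hf_int tendsto_neg_atTop_atBot tendsto_id
  have hfinal : c * ∫ x, (x - M) ^ 2 * f x ≤ 1 := by
    have h := le_of_tendsto_of_tendsto hlim1 hlim2 ?_
    · simpa using h
    · filter_upwards [eventually_ge_atTop (0 : ℝ)] with R hR using hineq R hR
  refine ⟨hx2f_int, ?_⟩
  rw [inv_eq_one_div, le_div_iff₀ hc]
  linarith [hfinal]
end

section
/- Let α ∈ ℝ, y ∈ ℝ, and let φ, χ, ψ : ℝ → ℝ be twice continuously differentiable functions such that φ' is nonincreasing (φ concave) and χ' is nonincreasing. Assume that for every x ∈ ℝ the functions z ↦ e^{φ(z−αx)+χ(z)}, z ↦ |φ'(z−αx)| e^{φ(z−αx)+χ(z)}, and z ↦ |φ''(z−αx)| e^{φ(z−αx)+χ(z)} are Lebesgue integrable with ∫ e^{φ(z−αx)+χ(z)} dz > 0, that e^{φ(z−αx)+χ(z)} and its z-derivative vanish as |z| → ∞, and that differentiation under the integral sign in x is valid. Define F(x) := ψ(y − x) + log ∫_ℝ e^{φ(z−αx)+χ(z)}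 dz. Then F is twice differentiable and F''(x) ≤ ψ''(y − x) for every x ∈ ℝ. -/
open MeasureTheory Filter intervalIntegral


lemma exists_small_seq (H : ℝ → ℝ) (h0 : ∀ z, 0 ≤ H z) (hI : Integrable H) :
    ∃ b : ℕ → ℝ, (∀ n : ℕ, (n : ℝ) ≤ b n) ∧
      Tendsto (fun n : ℕ => H (b n)) atTop (nhds 0) := by
  have key : ∀ n : ℕ, ∃ t, (n : ℝ) ≤ t ∧ H t < 1 / (n + 1) := by
    intro n
    by_contra hcon
    push_neg at hcon
    have hnp : (0 : ℝ) < (n : ℝ) + 1 := by positivity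
    have hcpos : (0 : ℝ) < 1 / ((n : ℝ) + 1) := by positivity
    have hIint : 0 ≤ ∫ z, H z := integral_nonneg h0
    obtain ⟨T, hT⟩ : ∃ T, T = ∫ z, H z := ⟨_, rfl⟩
    rw [← hT] at hIint
    have hRn : (0 : ℝ) ≤ (T + 1) * ((n : ℝ) + 1) := by positivity
    have h1 : (1 / ((n : ℝ) + 1)) *
        (volume (Set.Ioc (n : ℝ) ((n : ℝ) + (T + 1) * ((n : ℝ) + 1)))).toReal ≤
        ∫ z in Set.Ioc (n : ℝ) ((n : ℝ) + (T + 1) * ((n : ℝ) + 1)), H z := by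
      apply setIntegral_ge_of_const_le_real measurableSet_Ioc
      · simp [Real.volume_Ioc]
      · intro t ht
        exact hcon t (le_of_lt ht.1)
      · exact hI.integrableOn
    have h2 : ∫ z in Set.Ioc (n : ℝ) ((n : ℝ) + (T + 1) * ((n : ℝ) + 1)), H z ≤ T := by
      rw [hT]; exact setIntegral_le_integral hI (ae_of_all _ h0)
    have h3 : (volume (Set.Ioc (n : ℝ) ((n : ℝ) + (T + 1) * ((n : ℝ) + 1)))).toReal
        = (T + 1) * ((n : ℝ) + 1) := by
      rw [Real.volume_Ioc, ENNReal.toReal_ofReal (by linarith)]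
      ring
    rw [h3] at h1
    have h4 : (1 / ((n : ℝ) + 1)) * ((T + 1) * ((n : ℝ) + 1)) = T + 1 := by
      field_simp
    nlinarith
  choose b hb1 hb2 using key
  refine ⟨b, hb1, ?_⟩
  have h5 : Tendsto (fun n : ℕ => 1 / ((n : ℝ) + 1)) atTop (nhds 0) :=
    tendsto_one_div_add_atTop_nhds_zero_nat
  exact squeeze_zero (fun n => h0 _) (fun n => (hb2 n).le) h5



lemma chebyshev_interval (a b : ℝ) (hab : a ≤ b) (f g P : ℝ → ℝ)
    (hf : Continuous f) (hg : Continuous g) (hP : Continuous P)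
    (hP0 : ∀ z, 0 ≤ P z) (hfa : Antitone f) (hga : Antitone g) :
    (∫ s in a..b, f s * P s) * (∫ s in a..b, g s * P s) ≤
      (∫ s in a..b, f s * g s * P s) * (∫ s in a..b, P s) := by
  obtain ⟨M, hM⟩ : ∃ M, M = ∫ s in a..b, P s := ⟨_, rfl⟩
  obtain ⟨Jf, hJf⟩ : ∃ J, J = ∫ s in a..b, f s * P s := ⟨_, rfl⟩
  obtain ⟨Jg, hJg⟩ : ∃ J, J = ∫ s in a..b, g s * P s := ⟨_, rfl⟩
  obtain ⟨Jfg, hJfg⟩ : ∃ J, J = ∫ s in a..b, f s * g s * P s := ⟨_, rfl⟩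
  have iP : IntervalIntegrable P volume a b := hP.intervalIntegrable a b
  have ifP : IntervalIntegrable (fun s => f s * P s) volume a b :=
    (hf.mul hP).intervalIntegrable a b
  have igP : IntervalIntegrable (fun s => g s * P s) volume a b :=
    (hg.mul hP).intervalIntegrable a b
  have ifgP : IntervalIntegrable (fun s => f s * g s * P s) volume a b :=
    ((hf.mul hg).mul hP).intervalIntegrable a b
  -- pointwise positive inner integral
  have inner : ∀ t : ℝ, 0 ≤ Jfg - f t * Jg - g t * Jf + f t * g t * M := by
    intro t
    have h1 : 0 ≤ ∫ s in a..b, (f s - f t) * (g s - g t) * P s := by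
      apply intervalIntegral.integral_nonneg hab
      intro u _
      apply mul_nonneg _ (hP0 u)
      rcases le_total u t with h | h
      · exact mul_nonneg (by simp [sub_nonneg, hfa h]) (by simp [sub_nonneg, hga h])
      · have h1' : f u - f t ≤ 0 := by simp [sub_nonpos]; exact hfa h
        have h2' : g u - g t ≤ 0 := by simp [sub_nonpos]; exact hga h
        nlinarith
    have h2 : (∫ s in a..b, (f s - f t) * (g s - g t) * P s)
        = Jfg - f t * Jg - g t * Jf + f t * g t * M := by
      have expand : ∀ s : ℝ, (f s - f t) * (g s - g t) * P s
          = f s * g s * P s - f t * (g s * P s) - g t * (f s * P s) + f t * g t * P s := by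
        intro s; ring
      rw [intervalIntegral.integral_congr (g := fun s =>
        f s * g s * P s - f t * (g s * P s) - g t * (f s * P s) + f t * g t * P s)
        (fun s _ => expand s)]
      rw [intervalIntegral.integral_add (((ifgP.sub (igP.const_mul _)).sub
        (ifP.const_mul _))) (iP.const_mul _)]
      rw [intervalIntegral.integral_sub (ifgP.sub (igP.const_mul _)) (ifP.const_mul _)]
      rw [intervalIntegral.integral_sub ifgP (igP.const_mul _)]
      rw [intervalIntegral.integral_const_mul, intervalIntegral.integral_const_mul,
        intervalIntegral.integral_const_mul]
      rw [← hM, ← hJf, ← hJg, ← hJfg]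
    linarith [h2 ▸ h1]
  -- integrate the nonneg function  t ↦ (Jfg - f t * Jg - g t * Jf + f t * g t * M) * P t
  have outer : 0 ≤ ∫ t in a..b, (Jfg - f t * Jg - g t * Jf + f t * g t * M) * P t := by
    apply intervalIntegral.integral_nonneg hab
    intro u _
    exact mul_nonneg (inner u) (hP0 u)
  have expand2 : ∀ t : ℝ, (Jfg - f t * Jg - g t * Jf + f t * g t * M) * P t
      = Jfg * P t - Jg * (f t * P t) - Jf * (g t * P t) + M * (f t * g t * P t) := by
    intro t; ring
  rw [intervalIntegral.integral_congr (fun t _ => expand2 t)] at outer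
  rw [intervalIntegral.integral_add (((iP.const_mul _).sub (ifP.const_mul _)).sub
      (igP.const_mul _)) (ifgP.const_mul _)] at outer
  rw [intervalIntegral.integral_sub ((iP.const_mul _).sub (ifP.const_mul _))
      (igP.const_mul _)] at outer
  rw [intervalIntegral.integral_sub (iP.const_mul _) (ifP.const_mul _)] at outer
  rw [intervalIntegral.integral_const_mul, intervalIntegral.integral_const_mul,
    intervalIntegral.integral_const_mul, intervalIntegral.integral_const_mul] at outer
  rw [← hM, ← hJf, ← hJg, ← hJfg] at outer
  rw [← hM, ← hJf, ← hJg, ← hJfg]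
  linarith [outer]

lemma key_ineq (f g f2 P : ℝ → ℝ)
    (hf : Continuous f) (hg : Continuous g) (hf2 : Continuous f2) (hP : Continuous P)
    (hP0 : ∀ z, 0 < P z) (hfa : Antitone f) (hga : Antitone g)
    (hdP : ∀ z, HasDerivAt P ((f z + g z) * P z) z)
    (hdfP : ∀ z, HasDerivAt (fun s => f s * P s) ((f2 z + f z * (f z + g z)) * P z) z)
    (hiP : Integrable P) (hifP : Integrable (fun z => |f z| * P z))
    (hiK : Integrable (fun z => (f2 z + f z ^ 2) * P z)) :
    (Tendsto P (cocompact ℝ) (nhds 0)) →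
    (∫ z, (f2 z + f z ^ 2) * P z) * (∫ z, P z) ≤ (∫ z, f z * P z) ^ 2 := by
  intro hv
  have hifP' : Integrable (fun z => f z * P z) := by
    refine hifP.mono' ((hf.mul hP).aestronglyMeasurable) (ae_of_all _ fun z => ?_)
    rw [Real.norm_eq_abs, abs_mul, abs_of_pos (hP0 z)]
  -- sequences to the right and to the left
  obtain ⟨b, hb1, hb2⟩ := exists_small_seq (fun z => |f z| * P z)
    (fun z => mul_nonneg (abs_nonneg _) (hP0 z).le) hifP
  obtain ⟨b', hb'1, hb'2⟩ := exists_small_seq (fun z => |f (-z)| * P (-z))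
    (fun z => mul_nonneg (abs_nonneg _) (hP0 _).le) (hifP.comp_neg)
  set a : ℕ → ℝ := fun n => -(b' n) with ha
  have hbtop : Tendsto b atTop atTop :=
    tendsto_atTop_mono hb1 tendsto_natCast_atTop_atTop
  have habot : Tendsto a atTop atBot := by
    rw [ha, tendsto_neg_atBot_iff]
    exact tendsto_atTop_mono hb'1 tendsto_natCast_atTop_atTop
  have hab : ∀ n : ℕ, a n ≤ b n := fun n => by
    have h1 := hb1 n; have h2 := hb'1 n
    have : (0:ℝ) ≤ (n:ℝ) := Nat.cast_nonneg n
    simp only [ha]; linarith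
  -- pointwise limits at the endpoints
  have hPtop : Tendsto (fun n : ℕ => P (b n)) atTop (nhds 0) :=
    (hv.mono_left (by rw [cocompact_eq_atBot_atTop]; exact le_sup_right)).comp hbtop
  have hPbot : Tendsto (fun n : ℕ => P (a n)) atTop (nhds 0) :=
    (hv.mono_left (by rw [cocompact_eq_atBot_atTop]; exact le_sup_left)).comp habot
  have hfPtop : Tendsto (fun n : ℕ => f (b n) * P (b n)) atTop (nhds 0) := by
    apply squeeze_zero_norm _ hb2
    intro n
    rw [Real.norm_eq_abs, abs_mul, abs_of_pos (hP0 _)]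
  have hfPbot : Tendsto (fun n : ℕ => f (a n) * P (a n)) atTop (nhds 0) := by
    apply squeeze_zero_norm _ hb'2
    intro n
    simp only [ha, neg_neg]
    rw [Real.norm_eq_abs, abs_mul, abs_of_pos (hP0 _)]
  -- convergence of interval integrals
  have hK : Tendsto (fun n : ℕ => ∫ s in a n..b n, (f2 s + f s ^ 2) * P s) atTop
      (nhds (∫ z, (f2 z + f z ^ 2) * P z)) :=
    intervalIntegral_tendsto_integral hiK habot hbtop
  have hM : Tendsto (fun n : ℕ => ∫ s in a n..b n, P s) atTop (nhds (∫ z, P z)) :=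
    intervalIntegral_tendsto_integral hiP habot hbtop
  have hJ : Tendsto (fun n : ℕ => ∫ s in a n..b n, f s * P s) atTop
      (nhds (∫ z, f z * P z)) :=
    intervalIntegral_tendsto_integral hifP' habot hbtop
  -- per-n inequality
  have step : ∀ n : ℕ,
      (∫ s in a n..b n, (f2 s + f s ^ 2) * P s) * (∫ s in a n..b n, P s) ≤
      (f (b n) * P (b n) - f (a n) * P (a n)) * (∫ s in a n..b n, P s)
        - (∫ s in a n..b n, f s * P s) * (P (b n) - P (a n))
        + (∫ s in a n..b n, f s * P s) ^ 2 := by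
    intro n
    have iK : IntervalIntegrable (fun s => (f2 s + f s ^ 2) * P s) volume (a n) (b n) :=
      ((hf2.add (hf.pow 2)).mul hP).intervalIntegrable _ _
    have ifgP : IntervalIntegrable (fun s => f s * g s * P s) volume (a n) (b n) :=
      ((hf.mul hg).mul hP).intervalIntegrable _ _
    have ifP : IntervalIntegrable (fun s => f s * P s) volume (a n) (b n) :=
      (hf.mul hP).intervalIntegrable _ _
    have igP : IntervalIntegrable (fun s => g s * P s) volume (a n) (b n) :=
      (hg.mul hP).intervalIntegrable _ _
    -- FTC for f*P
    have id1 : (∫ s in a n..b n, (f2 s + f s ^ 2) * P s)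
        + (∫ s in a n..b n, f s * g s * P s)
        = f (b n) * P (b n) - f (a n) * P (a n) := by
      have ftc : ∫ s in a n..b n, (f2 s + f s * (f s + g s)) * P s
          = f (b n) * P (b n) - f (a n) * P (a n) :=
        intervalIntegral.integral_eq_sub_of_hasDerivAt (fun t _ => hdfP t)
          (((hf2.add (hf.mul (hf.add hg))).mul hP).intervalIntegrable _ _)
      rw [← ftc, ← intervalIntegral.integral_add iK ifgP]
      apply intervalIntegral.integral_congr
      intro s _; ring
    -- FTC for P
    have id2 : (∫ s in a n..b n, f s * P s) + (∫ s in a n..b n, g s * P s)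
        = P (b n) - P (a n) := by
      have ftc : ∫ s in a n..b n, (f s + g s) * P s = P (b n) - P (a n) :=
        intervalIntegral.integral_eq_sub_of_hasDerivAt (fun t _ => hdP t)
          (((hf.add hg).mul hP).intervalIntegrable _ _)
      rw [← ftc, ← intervalIntegral.integral_add ifP igP]
      apply intervalIntegral.integral_congr
      intro s _; ring
    have cheb := chebyshev_interval (a n) (b n) (hab n) f g P hf hg hP
      (fun z => (hP0 z).le) hfa hga
    set K := ∫ s in a n..b n, (f2 s + f s ^ 2) * P s with hKdef
    set M := ∫ s in a n..b n, P s with hMdef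
    set Jf := ∫ s in a n..b n, f s * P s with hJfdef
    set Jg := ∫ s in a n..b n, g s * P s with hJgdef
    set Jfg := ∫ s in a n..b n, f s * g s * P s with hJfgdef
    have h1 : K = (f (b n) * P (b n) - f (a n) * P (a n)) - Jfg := by linarith
    have h2 : Jg = (P (b n) - P (a n)) - Jf := by linarith
    calc K * M = (f (b n) * P (b n) - f (a n) * P (a n)) * M - Jfg * M := by
          rw [h1]; ring
      _ ≤ (f (b n) * P (b n) - f (a n) * P (a n)) * M - Jf * Jg := by linarith
      _ = (f (b n) * P (b n) - f (a n) * P (a n)) * M - Jf * (P (b n) - P (a n)) + Jf ^ 2 := by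
          rw [h2]; ring
  -- pass to the limit
  refine le_of_tendsto_of_tendsto' (hK.mul hM) ?_ step
  have : Tendsto (fun n : ℕ =>
      (f (b n) * P (b n) - f (a n) * P (a n)) * (∫ s in a n..b n, P s)
        - (∫ s in a n..b n, f s * P s) * (P (b n) - P (a n))
        + (∫ s in a n..b n, f s * P s) ^ 2) atTop
      (nhds ((0 - 0) * (∫ z, P z) - (∫ z, f z * P z) * (0 - 0) + (∫ z, f z * P z) ^ 2)) :=
    (((hfPtop.sub hfPbot).mul hM).sub (hJ.mul (hPtop.sub hPbot))).add (hJ.pow 2)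
  simpa using this

/-- If `φ, χ, ψ` are `C²` with `φ'` and `χ'` nonincreasing, and the stated
integrability, positivity, vanishing-at-infinity and differentiation-under-the-integral
hypotheses hold, then `F(x) = ψ(y − x) + log ∫ e^{φ(z−αx)+χ(z)} dz` is twice differentiable
with `F''(x) ≤ ψ''(y − x)` for every `x`. -/
theorem curvature_bound_strongly_unimodal
    (α y : ℝ) (φ χ ψ : ℝ → ℝ)
    (hφ : ContDiff ℝ 2 φ) (hχ : ContDiff ℝ 2 χ) (hψ : ContDiff ℝ 2 ψ)
    (hφ' : Antitone (deriv φ)) (hχ' : Antitone (deriv χ))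
    (hint : ∀ x : ℝ, Integrable fun z => Real.exp (φ (z - α * x) + χ z))
    (hint1 : ∀ x : ℝ,
      Integrable fun z => |deriv φ (z - α * x)| * Real.exp (φ (z - α * x) + χ z))
    (hint2 : ∀ x : ℝ,
      Integrable fun z => |deriv (deriv φ) (z - α * x)| * Real.exp (φ (z - α * x) + χ z))
    (hpos : ∀ x : ℝ, 0 < ∫ z, Real.exp (φ (z - α * x) + χ z))
    (hvanish : ∀ x : ℝ,
      Tendsto (fun z => Real.exp (φ (z - α * x) + χ z)) (cocompact ℝ) (nhds 0))
    (hvanish' : ∀ x : ℝ,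
      Tendsto (fun z => (deriv φ (z - α * x) + deriv χ z) * Real.exp (φ (z - α * x) + χ z))
        (cocompact ℝ) (nhds 0))
    (hG1 : ∀ x : ℝ,
      HasDerivAt (fun t => ∫ z, Real.exp (φ (z - α * t) + χ z))
        (∫ z, -α * deriv φ (z - α * x) * Real.exp (φ (z - α * x) + χ z)) x)
    (hG2 : ∀ x : ℝ,
      HasDerivAt (fun t => ∫ z, -α * deriv φ (z - α * t) * Real.exp (φ (z - α * t) + χ z))
        (∫ z, (α ^ 2 * deriv (deriv φ) (z - α * x) +
            α ^ 2 * (deriv φ (z - α * x)) ^ 2) * Real.exp (φ (z - α * x) + χ z)) x) :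
    Differentiable ℝ
        (fun x => ψ (y - x) + Real.log (∫ z, Real.exp (φ (z - α * x) + χ z))) ∧
      Differentiable ℝ
        (deriv fun x => ψ (y - x) + Real.log (∫ z, Real.exp (φ (z - α * x) + χ z))) ∧
      ∀ x : ℝ,
        deriv (deriv fun x => ψ (y - x) + Real.log (∫ z, Real.exp (φ (z - α * x) + χ z))) x ≤
          deriv (deriv ψ) (y - x) := by
  classical
  have hφdiff : Differentiable ℝ φ := hφ.differentiable two_ne_zero
  have hχdiff : Differentiable ℝ χ := hχ.differentiable two_ne_zero
  have hψdiff : Differentiable ℝ ψ := hψ.differentiable two_ne_zero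
  have h2eq : (2 : WithTop ℕ∞) = 1 + 1 := by norm_num
  have hφd1 : ContDiff ℝ 1 (deriv φ) := (contDiff_succ_iff_deriv.mp (h2eq ▸ hφ)).2.2
  have hψd1 : ContDiff ℝ 1 (deriv ψ) := (contDiff_succ_iff_deriv.mp (h2eq ▸ hψ)).2.2
  have hχd1 : ContDiff ℝ 1 (deriv χ) := (contDiff_succ_iff_deriv.mp (h2eq ▸ hχ)).2.2
  -- first derivative of the ψ part
  have hpsi1 : ∀ x : ℝ, HasDerivAt (fun x => ψ (y - x)) (-deriv ψ (y - x)) x := by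
    intro x
    have h1 : HasDerivAt (fun x : ℝ => y - x) (-1) x := by
      simpa using (hasDerivAt_id x).const_sub y
    simpa [Function.comp_def] using ((hψdiff (y - x)).hasDerivAt.comp x h1)
  have hFd : ∀ x : ℝ, HasDerivAt
      (fun x => ψ (y - x) + Real.log (∫ z, Real.exp (φ (z - α * x) + χ z)))
      (-deriv ψ (y - x) +
        (∫ z, -α * deriv φ (z - α * x) * Real.exp (φ (z - α * x) + χ z)) /
          (∫ z, Real.exp (φ (z - α * x) + χ z))) x :=
    fun x => (hpsi1 x).add ((hG1 x).log (hpos x).ne')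
  have hdF : (deriv fun x => ψ (y - x) + Real.log (∫ z, Real.exp (φ (z - α * x) + χ z)))
      = fun x => -deriv ψ (y - x) +
        (∫ z, -α * deriv φ (z - α * x) * Real.exp (φ (z - α * x) + χ z)) /
          (∫ z, Real.exp (φ (z - α * x) + χ z)) :=
    funext fun x => (hFd x).deriv
  -- second derivative pieces
  have hpsi2 : ∀ x : ℝ, HasDerivAt (fun x => -deriv ψ (y - x))
      (deriv (deriv ψ) (y - x)) x := by
    intro x
    have h1 : HasDerivAt (fun x : ℝ => y - x) (-1) x := by
      simpa using (hasDerivAt_id x).const_sub y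
    have h2 : HasDerivAt (deriv ψ) (deriv (deriv ψ) (y - x)) (y - x) :=
      ((hψd1.differentiable one_ne_zero) (y - x)).hasDerivAt
    exact (h2.comp x h1).neg.congr_deriv (by ring)
  have hAG : ∀ x : ℝ, HasDerivAt
      (fun t => (∫ z, -α * deriv φ (z - α * t) * Real.exp (φ (z - α * t) + χ z)) /
          (∫ z, Real.exp (φ (z - α * t) + χ z)))
      (((∫ z, (α ^ 2 * deriv (deriv φ) (z - α * x) +
            α ^ 2 * (deriv φ (z - α * x)) ^ 2) * Real.exp (φ (z - α * x) + χ z)) *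
          (∫ z, Real.exp (φ (z - α * x) + χ z)) -
        (∫ z, -α * deriv φ (z - α * x) * Real.exp (φ (z - α * x) + χ z)) *
          (∫ z, -α * deriv φ (z - α * x) * Real.exp (φ (z - α * x) + χ z))) /
        (∫ z, Real.exp (φ (z - α * x) + χ z)) ^ 2) x :=
    fun x => (hG2 x).div (hG1 x) (hpos x).ne'
  have hF2 : ∀ x : ℝ, HasDerivAt
      (deriv fun x => ψ (y - x) + Real.log (∫ z, Real.exp (φ (z - α * x) + χ z)))
      (deriv (deriv ψ) (y - x) +
        ((∫ z, (α ^ 2 * deriv (deriv φ) (z - α * x) +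
            α ^ 2 * (deriv φ (z - α * x)) ^ 2) * Real.exp (φ (z - α * x) + χ z)) *
          (∫ z, Real.exp (φ (z - α * x) + χ z)) -
        (∫ z, -α * deriv φ (z - α * x) * Real.exp (φ (z - α * x) + χ z)) *
          (∫ z, -α * deriv φ (z - α * x) * Real.exp (φ (z - α * x) + χ z))) /
        (∫ z, Real.exp (φ (z - α * x) + χ z)) ^ 2) x := by
    intro x
    rw [hdF]
    exact (hpsi2 x).add (hAG x)
  refine ⟨fun x => (hFd x).differentiableAt, fun x => (hF2 x).differentiableAt, ?_⟩
  intro x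
  rw [(hF2 x).deriv]
  -- it remains to bound the quotient term by 0
  have key : ((∫ z, (α ^ 2 * deriv (deriv φ) (z - α * x) +
            α ^ 2 * (deriv φ (z - α * x)) ^ 2) * Real.exp (φ (z - α * x) + χ z)) *
          (∫ z, Real.exp (φ (z - α * x) + χ z)) -
        (∫ z, -α * deriv φ (z - α * x) * Real.exp (φ (z - α * x) + χ z)) *
          (∫ z, -α * deriv φ (z - α * x) * Real.exp (φ (z - α * x) + χ z))) ≤ 0 := by
    set f : ℝ → ℝ := fun z => deriv φ (z - α * x) with hfdef
    set g : ℝ → ℝ := fun z => deriv χ z with hgdef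
    set f2 : ℝ → ℝ := fun z => deriv (deriv φ) (z - α * x) with hf2def
    set P : ℝ → ℝ := fun z => Real.exp (φ (z - α * x) + χ z) with hPdef
    have hA : (∫ z, -α * deriv φ (z - α * x) * Real.exp (φ (z - α * x) + χ z))
        = -α * ∫ z, f z * P z := by
      rw [show (fun z => -α * deriv φ (z - α * x) * Real.exp (φ (z - α * x) + χ z))
          = fun z => -α * (f z * P z) from funext fun z => by simp [hfdef, hPdef]; ring,
        MeasureTheory.integral_const_mul]
    have hB : (∫ z, (α ^ 2 * deriv (deriv φ) (z - α * x) +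
            α ^ 2 * (deriv φ (z - α * x)) ^ 2) * Real.exp (φ (z - α * x) + χ z))
        = α ^ 2 * ∫ z, (f2 z + f z ^ 2) * P z := by
      rw [show (fun z => (α ^ 2 * deriv (deriv φ) (z - α * x) +
            α ^ 2 * (deriv φ (z - α * x)) ^ 2) * Real.exp (φ (z - α * x) + χ z))
          = fun z => α ^ 2 * ((f2 z + f z ^ 2) * P z) from
          funext fun z => by simp [hfdef, hf2def, hPdef]; ring,
        MeasureTheory.integral_const_mul]
    rw [hA, hB]
    by_cases hiK : Integrable (fun z => (f2 z + f z ^ 2) * P z)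
    · -- the main analytic inequality
      have hfc : Continuous f := (hφ.continuous_deriv one_le_two).comp
        (continuous_id.sub continuous_const)
      have hgc : Continuous g := hχ.continuous_deriv one_le_two
      have hf2c : Continuous f2 := (hφd1.continuous_deriv le_rfl).comp
        (continuous_id.sub continuous_const)
      have hPc : Continuous P := (Real.continuous_exp.comp
        ((hφ.continuous.comp (continuous_id.sub continuous_const)).add hχ.continuous))
      have hP0 : ∀ z, 0 < P z := fun z => Real.exp_pos _
      have hfa : Antitone f := fun u v h => hφ' (sub_le_sub_right h (α * x))
      have hga : Antitone g := hχ'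
      have hdφz : ∀ z : ℝ, HasDerivAt (fun z => φ (z - α * x)) (f z) z := by
        intro z
        simpa [Function.comp_def] using ((hφdiff (z - α * x)).hasDerivAt.comp z
          ((hasDerivAt_id z).sub_const (α * x)))
      have hdP : ∀ z : ℝ, HasDerivAt P ((f z + g z) * P z) z := by
        intro z
        have := ((hdφz z).add (hχdiff z).hasDerivAt).exp
        exact this.congr_deriv (by simp only [hPdef, hgdef, Pi.add_apply]; ring)
      have hdf : ∀ z : ℝ, HasDerivAt f (f2 z) z := by
        intro z
        simpa [Function.comp_def] using (((hφd1.differentiable one_ne_zero) (z - α * x)).hasDerivAt.comp z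
          ((hasDerivAt_id z).sub_const (α * x)))
      have hdfP : ∀ z : ℝ, HasDerivAt (fun s => f s * P s)
          ((f2 z + f z * (f z + g z)) * P z) z := by
        intro z
        have := (hdf z).mul (hdP z)
        exact this.congr_deriv (by ring)
      have hk := key_ineq f g f2 P hfc hgc hf2c hPc hP0 hfa hga hdP hdfP
        (hint x) (hint1 x) hiK (hvanish x)
      nlinarith [hk, sq_nonneg α, sq_nonneg (∫ z, f z * P z)]
    · rw [integral_undef hiK]
      nlinarith [sq_nonneg (α * ∫ z, f z * P z)]
  have hdiv : ((∫ z, (α ^ 2 * deriv (deriv φ) (z - α * x) +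
            α ^ 2 * (deriv φ (z - α * x)) ^ 2) * Real.exp (φ (z - α * x) + χ z)) *
          (∫ z, Real.exp (φ (z - α * x) + χ z)) -
        (∫ z, -α * deriv φ (z - α * x) * Real.exp (φ (z - α * x) + χ z)) *
          (∫ z, -α * deriv φ (z - α * x) * Real.exp (φ (z - α * x) + χ z))) /
        (∫ z, Real.exp (φ (z - α * x) + χ z)) ^ 2 ≤ 0 :=
    div_nonpos_of_nonpos_of_nonneg key (sq_nonneg _)
  linarith
end

section
/- Let α ∈ ℝ and let φ, χ : ℝ → ℝ be twice continuously differentiable functions such that φ' is nonincreasing (φ concave) and χ' is nonincreasing. Assume that for every x ∈ ℝ the functions z ↦ e^{φ(z−αx)+χ(z)}, z ↦ |z| e^{φ(z−αx)+χ(z)}, and z ↦ |z φ'(z−αx)| e^{φ(z−αx)+χ(z)} are Lebesgue integrable with ∫ e^{φ(z−αx)+χ(z)} dz > 0, that (z − c) e^{φ(z−αx)+χ(z)} → 0 as |z| → ∞ for every constant c, and that differentiation under the integral sign in x is valid. Define e(x) := ∫_ℝ z e^{φ(z−αx)+χ(z)} dz / ∫_ℝ e^{φ(z−αx)+χ(z)}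 dz. Then e is differentiable and |e'(x)| ≤ |α| for every x ∈ ℝ. -/
open MeasureTheory Filter

lemma aux_integrable (f g : ℝ → ℝ) (hf : Continuous f) (hg : Continuous g)
    (hg0 : ∀ z, 0 ≤ g z) (h : Integrable fun z => |z * f z| * g z) :
    Integrable fun z => f z * g z := by
  have hmeas : AEStronglyMeasurable (fun z => f z * g z) volume :=
    (hf.mul hg).aestronglyMeasurable
  have hind : Integrable
      (Set.indicator (Set.Icc (-1:ℝ) 1) (fun z => |f z| * g z)) := by
    refine (IntegrableOn.integrable_indicator ?_ measurableSet_Icc)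
    exact ((hf.abs.mul hg).integrableOn_Icc)
  refine (h.add hind).mono' hmeas ?_
  filter_upwards with z
  simp only [Pi.add_apply]
  rcases le_or_gt |z| 1 with hz | hz
  · have hmem : z ∈ Set.Icc (-1:ℝ) 1 := abs_le.1 hz
    rw [Set.indicator_of_mem hmem]
    have : ‖f z * g z‖ = |f z| * g z := by
      rw [Real.norm_eq_abs, abs_mul, abs_of_nonneg (hg0 z)]
    rw [this]
    have : (0:ℝ) ≤ |z * f z| * g z := mul_nonneg (abs_nonneg _) (hg0 z)
    linarith
  · have h1 : ‖f z * g z‖ = |f z| * g z := by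
      rw [Real.norm_eq_abs, abs_mul, abs_of_nonneg (hg0 z)]
    have h2 : |f z| * g z ≤ |z * f z| * g z := by
      rw [abs_mul]
      have : |f z| ≤ |z| * |f z| := by
        nlinarith [abs_nonneg (f z)]
      exact mul_le_mul_of_nonneg_right this (hg0 z)
    have h3 : (0:ℝ) ≤ Set.indicator (Set.Icc (-1:ℝ) 1) (fun z => |f z| * g z) z :=
      Set.indicator_nonneg (fun z _ => mul_nonneg (abs_nonneg _) (hg0 z)) z
    linarith

set_option maxHeartbeats 1000000 in
lemma key (c : ℝ) (φ χ : ℝ → ℝ)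
    (hφ : ContDiff ℝ 2 φ) (hχ : ContDiff ℝ 2 χ)
    (hφ' : Antitone (deriv φ)) (hχ' : Antitone (deriv χ))
    (hw : Integrable fun z => Real.exp (φ (z - c) + χ z))
    (hw1 : Integrable fun z => |z| * Real.exp (φ (z - c) + χ z))
    (hw2 : Integrable fun z => |z * deriv φ (z - c)| * Real.exp (φ (z - c) + χ z))
    (hDpos : 0 < ∫ z, Real.exp (φ (z - c) + χ z))
    (hvan : ∀ b : ℝ, Tendsto (fun z => (z - b) * Real.exp (φ (z - c) + χ z))
      (cocompact ℝ) (nhds 0)) :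
    -(∫ z, Real.exp (φ (z - c) + χ z)) ≤
      (∫ z, (z - (∫ z, z * Real.exp (φ (z - c) + χ z)) / (∫ z, Real.exp (φ (z - c) + χ z))) *
        deriv φ (z - c) * Real.exp (φ (z - c) + χ z)) ∧
    (∫ z, (z - (∫ z, z * Real.exp (φ (z - c) + χ z)) / (∫ z, Real.exp (φ (z - c) + χ z))) *
        deriv φ (z - c) * Real.exp (φ (z - c) + χ z)) ≤ 0 := by
  set w : ℝ → ℝ := fun z => Real.exp (φ (z - c) + χ z) with hw_def
  have hw0 : ∀ z, 0 < w z := fun z => Real.exp_pos _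
  set D : ℝ := ∫ z, w z with hD_def
  set N : ℝ := ∫ z, z * w z with hN_def
  set m : ℝ := N / D with hm_def
  -- continuity facts
  have hφc : Continuous (deriv φ) := hφ.continuous_deriv one_le_two
  have hχc : Continuous (deriv χ) := hχ.continuous_deriv one_le_two
  have hφ'c : Continuous (fun z : ℝ => deriv φ (z - c)) :=
    hφc.comp (continuous_id.sub continuous_const)
  have hwc : Continuous w :=
    ((hφ.continuous.comp (continuous_id.sub continuous_const)).add hχ.continuous).rexp
  -- integrability facts
  have hzw : Integrable (fun z => z * w z) := by
    refine hw1.mono' (continuous_id.mul hwc).aestronglyMeasurable ?_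
    filter_upwards with z
    rw [Real.norm_eq_abs, abs_mul, abs_of_pos (hw0 z)]
  have hφ'w : Integrable (fun z => deriv φ (z - c) * w z) :=
    aux_integrable _ _ hφ'c hwc (fun z => (hw0 z).le) hw2
  have hzφ'w : Integrable (fun z => z * deriv φ (z - c) * w z) := by
    refine hw2.mono' ((continuous_id.mul hφ'c).mul hwc).aestronglyMeasurable ?_
    filter_upwards with z
    rw [Real.norm_eq_abs, abs_mul, abs_of_pos (hw0 z)]
  have hI_int : Integrable (fun z => (z - m) * deriv φ (z - c) * w z) := by
    have h := hzφ'w.sub (hφ'w.const_mul m)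
    refine h.congr (Filter.Eventually.of_forall fun z => ?_)
    simp only [Pi.sub_apply]
    ring
  have hzmw : Integrable (fun z => (z - m) * w z) := by
    have h := hzw.sub (hw.const_mul m)
    refine h.congr (Filter.Eventually.of_forall fun z => ?_)
    simp only [Pi.sub_apply]
    ring
  -- ∫ (z - m) w = 0
  have hIzmw : ∫ z, (z - m) * w z = 0 := by
    have h1 : ∫ z, (z - m) * w z = ∫ z, (z * w z - m * w z) := by
      congr 1; ext z; ring
    rw [h1, integral_sub hzw (hw.const_mul m), integral_const_mul, ← hN_def, ← hD_def, hm_def]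
    field_simp
    ring
  -- pointwise antitone comparison
  have hcomp : ∀ (f : ℝ → ℝ), Antitone f → ∀ z, (z - m) * f z * w z ≤ (z - m) * f m * w z := by
    intro f hf z
    have h : (z - m) * f z ≤ (z - m) * f m := by
      rcases le_total z m with h | h
      · have := hf h
        nlinarith
      · have := hf h
        nlinarith
    exact mul_le_mul_of_nonneg_right h (hw0 z).le
  -- upper bound : I ≤ 0
  have hupper : (∫ z, (z - m) * deriv φ (z - c) * w z) ≤ 0 := by
    have hφ'shift : Antitone (fun z : ℝ => deriv φ (z - c)) := by
      intro a b hab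
      exact hφ' (sub_le_sub_right hab c)
    have hle : ∀ z, (z - m) * deriv φ (z - c) * w z ≤ deriv φ (m - c) * ((z - m) * w z) := by
      intro z
      have h := hcomp (fun z => deriv φ (z - c)) hφ'shift z
      linarith
    have hint2' : Integrable (fun z => deriv φ (m - c) * ((z - m) * w z)) :=
      hzmw.const_mul _
    calc (∫ z, (z - m) * deriv φ (z - c) * w z)
        ≤ ∫ z, deriv φ (m - c) * ((z - m) * w z) :=
          integral_mono hI_int hint2' hle
      _ = deriv φ (m - c) * ∫ z, (z - m) * w z := integral_const_mul _ _
      _ = 0 := by rw [hIzmw, mul_zero]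
  refine ⟨?_, hupper⟩
  -- lower bound via FTC
  have hφd : ∀ z : ℝ, HasDerivAt (fun z => φ (z - c)) (deriv φ (z - c)) z := by
    intro z
    have h1 : HasDerivAt φ (deriv φ (z - c)) (z - c) :=
      ((hφ.differentiable two_ne_zero) (z - c)).hasDerivAt
    have h2 : HasDerivAt (fun z : ℝ => z - c) 1 z := (hasDerivAt_id z).sub_const c
    simpa [Function.comp_def] using h1.comp z h2
  have hχd : ∀ z : ℝ, HasDerivAt χ (deriv χ z) z :=
    fun z => ((hχ.differentiable two_ne_zero) z).hasDerivAt
  have hwd : ∀ z : ℝ, HasDerivAt w ((deriv φ (z - c) + deriv χ z) * w z) z := by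
    intro z
    have h := ((hφd z).add (hχd z)).exp
    simpa [hw_def, mul_comm] using h
  have hgd : ∀ z : ℝ, HasDerivAt (fun z => (z - m) * w z)
      (w z + (z - m) * ((deriv φ (z - c) + deriv χ z) * w z)) z := by
    intro z
    have h := ((hasDerivAt_id z).sub_const m).mul (hwd z)
    simpa [Pi.mul_def] using h
  have hg'c : Continuous (fun z => w z + (z - m) * ((deriv φ (z - c) + deriv χ z) * w z)) :=
    hwc.add ((continuous_id.sub continuous_const).mul ((hφ'c.add hχc).mul hwc))
  have hu_int : Integrable (fun z =>
      w z + (z - m) * deriv φ (z - c) * w z + deriv χ m * ((z - m) * w z)) :=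
    (hw.add hI_int).add (hzmw.const_mul _)
  have hu_cont : Continuous (fun z =>
      w z + (z - m) * deriv φ (z - c) * w z + deriv χ m * ((z - m) * w z)) := by
    refine (hwc.add ?_).add (continuous_const.mul ((continuous_id.sub continuous_const).mul hwc))
    exact ((continuous_id.sub continuous_const).mul hφ'c).mul hwc
  have hA_int : Integrable (fun z => w z + (z - m) * deriv φ (z - c) * w z) := hw.add hI_int
  have hB_int : Integrable (fun z => deriv χ m * ((z - m) * w z)) := hzmw.const_mul _
  have hIu : ∫ z, (w z + (z - m) * deriv φ (z - c) * w z + deriv χ m * ((z - m) * w z))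
      = D + ∫ z, (z - m) * deriv φ (z - c) * w z := by
    rw [integral_add hA_int hB_int, integral_add hw hI_int,
      integral_const_mul, hIzmw, mul_zero, add_zero, ← hD_def]
  have hg'le : ∀ z, w z + (z - m) * ((deriv φ (z - c) + deriv χ z) * w z) ≤
      w z + (z - m) * deriv φ (z - c) * w z + deriv χ m * ((z - m) * w z) := by
    intro z
    have h := hcomp (deriv χ) hχ' z
    nlinarith [h]
  have hstep : ∀ n : ℕ, ((n:ℝ) - m) * w n - ((-(n:ℝ)) - m) * w (-(n:ℝ)) ≤
      ∫ z in (-(n:ℝ))..n, (w z + (z - m) * deriv φ (z - c) * w z + deriv χ m * ((z - m) * w z)) := by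
    intro n
    have hftc : ∫ z in (-(n:ℝ))..n, (w z + (z - m) * ((deriv φ (z - c) + deriv χ z) * w z))
        = ((n:ℝ) - m) * w n - ((-(n:ℝ)) - m) * w (-(n:ℝ)) :=
      intervalIntegral.integral_eq_sub_of_hasDerivAt (fun z _ => hgd z)
        (hg'c.intervalIntegrable _ _)
    rw [← hftc]
    refine intervalIntegral.integral_mono_on
      ((neg_nonpos.mpr (Nat.cast_nonneg n)).trans (Nat.cast_nonneg n))
      (hg'c.intervalIntegrable _ _)
      (hu_cont.intervalIntegrable _ _) (fun z _ => hg'le z)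
  have hnat_top : Tendsto (fun n : ℕ => (n : ℝ)) atTop (cocompact ℝ) := by
    rw [cocompact_eq_atBot_atTop]
    exact tendsto_natCast_atTop_atTop.mono_right le_sup_right
  have hnat_bot : Tendsto (fun n : ℕ => -(n : ℝ)) atTop (cocompact ℝ) := by
    rw [cocompact_eq_atBot_atTop]
    exact (tendsto_neg_atTop_atBot.comp tendsto_natCast_atTop_atTop).mono_right le_sup_left
  have hA : Tendsto (fun n : ℕ => ((n:ℝ) - m) * w n - ((-(n:ℝ)) - m) * w (-(n:ℝ)))
      atTop (nhds 0) := by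
    have h1 : Tendsto (fun n : ℕ => ((n:ℝ) - m) * w n) atTop (nhds 0) :=
      (hvan m).comp hnat_top
    have h2 : Tendsto (fun n : ℕ => ((-(n:ℝ)) - m) * w (-(n:ℝ))) atTop (nhds 0) :=
      (hvan m).comp hnat_bot
    simpa using h1.sub h2
  have hB : Tendsto (fun n : ℕ =>
      ∫ z in (-(n:ℝ))..n, (w z + (z - m) * deriv φ (z - c) * w z + deriv χ m * ((z - m) * w z)))
      atTop (nhds (∫ z, (w z + (z - m) * deriv φ (z - c) * w z + deriv χ m * ((z - m) * w z)))) :=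
    intervalIntegral_tendsto_integral hu_int
      (tendsto_neg_atTop_atBot.comp tendsto_natCast_atTop_atTop) tendsto_natCast_atTop_atTop
  have hfinal : (0:ℝ) ≤
      ∫ z, (w z + (z - m) * deriv φ (z - c) * w z + deriv χ m * ((z - m) * w z)) :=
    le_of_tendsto_of_tendsto' hA hB hstep
  rw [hIu] at hfinal
  linarith

set_option maxHeartbeats 1000000

/-- If `φ, χ` are `C²` with `φ'` and `χ'` nonincreasing, and the stated
integrability, positivity, vanishing-at-infinity and differentiation-under-the-integral
hypotheses hold, then the conditional mean
`e(x) = (∫ z e^{φ(z−αx)+χ(z)} dz)/(∫ e^{φ(z−αx)+χ(z)} dz)` is differentiable with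
`|e'(x)| ≤ |α|` for every `x`. -/
theorem conditional_mean_lipschitz_strongly_unimodal
    (α : ℝ) (φ χ : ℝ → ℝ)
    (hφ : ContDiff ℝ 2 φ) (hχ : ContDiff ℝ 2 χ)
    (hφ' : Antitone (deriv φ)) (hχ' : Antitone (deriv χ))
    (hint : ∀ x : ℝ, Integrable fun z => Real.exp (φ (z - α * x) + χ z))
    (hint1 : ∀ x : ℝ, Integrable fun z => |z| * Real.exp (φ (z - α * x) + χ z))
    (hint2 : ∀ x : ℝ,
      Integrable fun z => |z * deriv φ (z - α * x)| * Real.exp (φ (z - α * x) + χ z))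
    (hpos : ∀ x : ℝ, 0 < ∫ z, Real.exp (φ (z - α * x) + χ z))
    (hvanish : ∀ x c : ℝ,
      Tendsto (fun z => (z - c) * Real.exp (φ (z - α * x) + χ z)) (cocompact ℝ) (nhds 0))
    (hN : ∀ x : ℝ,
      HasDerivAt (fun t => ∫ z, z * Real.exp (φ (z - α * t) + χ z))
        (∫ z, z * (-α * deriv φ (z - α * x)) * Real.exp (φ (z - α * x) + χ z)) x)
    (hD : ∀ x : ℝ,
      HasDerivAt (fun t => ∫ z, Real.exp (φ (z - α * t) + χ z))
        (∫ z, -α * deriv φ (z - α * x) * Real.exp (φ (z - α * x) + χ z)) x) :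
    Differentiable ℝ
        (fun x => (∫ z, z * Real.exp (φ (z - α * x) + χ z)) /
          ∫ z, Real.exp (φ (z - α * x) + χ z)) ∧
      ∀ x : ℝ,
        |deriv
            (fun x => (∫ z, z * Real.exp (φ (z - α * x) + χ z)) /
              ∫ z, Real.exp (φ (z - α * x) + χ z)) x| ≤ |α| := by
  have hdiv : ∀ x : ℝ, HasDerivAt
      (fun x => (∫ z, z * Real.exp (φ (z - α * x) + χ z)) /
        ∫ z, Real.exp (φ (z - α * x) + χ z))
      (((∫ z, z * (-α * deriv φ (z - α * x)) * Real.exp (φ (z - α * x) + χ z)) *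
          (∫ z, Real.exp (φ (z - α * x) + χ z)) -
        (∫ z, z * Real.exp (φ (z - α * x) + χ z)) *
          (∫ z, -α * deriv φ (z - α * x) * Real.exp (φ (z - α * x) + χ z))) /
        (∫ z, Real.exp (φ (z - α * x) + χ z)) ^ 2) x :=
    fun x => (hN x).div (hD x) (hpos x).ne'
  refine ⟨fun x => ((hdiv x).differentiableAt : _), fun x => ?_⟩
  set c : ℝ := α * x with hc_def
  set w : ℝ → ℝ := fun z => Real.exp (φ (z - c) + χ z) with hw_def
  have hw0 : ∀ z, 0 < w z := fun z => Real.exp_pos _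
  set D' : ℝ := ∫ z, w z with hD_def
  set N' : ℝ := ∫ z, z * w z with hN_def
  have hDpos : 0 < D' := hpos x
  set m : ℝ := N' / D' with hm_def
  set I : ℝ := ∫ z, (z - m) * deriv φ (z - c) * w z with hI_def
  obtain ⟨hIlow, hIhigh⟩ := key c φ χ hφ hχ hφ' hχ' (hint x) (hint1 x) (hint2 x)
    (hpos x) (hvanish x)
  -- integrability to split I
  have hφc : Continuous (deriv φ) := hφ.continuous_deriv one_le_two
  have hφ'c : Continuous (fun z : ℝ => deriv φ (z - c)) :=
    hφc.comp (continuous_id.sub continuous_const)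
  have hwc : Continuous w :=
    ((hφ.continuous.comp (continuous_id.sub continuous_const)).add hχ.continuous).rexp
  have hφ'w : Integrable (fun z => deriv φ (z - c) * w z) :=
    aux_integrable _ _ hφ'c hwc (fun z => (hw0 z).le) (hint2 x)
  have hzφ'w : Integrable (fun z => z * deriv φ (z - c) * w z) := by
    refine (hint2 x).mono' ((continuous_id.mul hφ'c).mul hwc).aestronglyMeasurable ?_
    filter_upwards with z
    rw [Real.norm_eq_abs, abs_mul, abs_of_pos (hw0 z)]
  have hsplit : I = (∫ z, z * deriv φ (z - c) * w z) - m * ∫ z, deriv φ (z - c) * w z := by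
    rw [hI_def]
    rw [← integral_const_mul, ← integral_sub hzφ'w (hφ'w.const_mul m)]
    congr 1; ext z; ring
  -- express the derivative
  have hderiv_eq : deriv
      (fun x => (∫ z, z * Real.exp (φ (z - α * x) + χ z)) /
        ∫ z, Real.exp (φ (z - α * x) + χ z)) x = -α * I / D' := by
    rw [(hdiv x).deriv]
    have e1 : (∫ z, z * (-α * deriv φ (z - c)) * w z) =
        -α * ∫ z, z * deriv φ (z - c) * w z := by
      rw [← integral_const_mul]; congr 1; ext z; ring
    have e2 : (∫ z, -α * deriv φ (z - c) * w z) = -α * ∫ z, deriv φ (z - c) * w z := by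
      rw [← integral_const_mul]; congr 1; ext z; ring
    have hDfold : (∫ z, Real.exp (φ (z - α * x) + χ z)) = D' := rfl
    have hNfold : (∫ z, z * Real.exp (φ (z - α * x) + χ z)) = N' := rfl
    rw [e1, e2, hsplit, hDfold, hNfold, hm_def]
    field_simp
    ring
  rw [hderiv_eq]
  have hIabs : |I| ≤ D' := abs_le.2 ⟨by linarith, le_trans hIhigh hDpos.le⟩
  rw [abs_div, abs_mul, abs_neg, abs_of_pos hDpos, div_le_iff₀ hDpos]
  nlinarith [abs_nonneg α, abs_nonneg I]
end
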